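/- arXiv:1901.04428 — 8 statements merged into one kernel-verified Lean document; each statement's English description precedes it below -/
import Mathlib

section
/- Let G be a countable group acting faithfully on the right by homeomorphisms on a second countable Hausdorff topological space X. Let U ⊆ X be open, let K be a finite-index subgroup of R_G(U), and let N be a normal subgroup of K such that the quotient K/N is an FC-group (every element of K/N has finite conjugacy class). If x ∈ U is a point such that for every open V with x ∈ V ⊆ U the orbit {x·g : g ∈ R_G(V)} is infinite, then there exists an open neighborhood W of x such that [R_G(W), R_G(W)] ≤ N. -/
open MulOpposite

/-- Pointwise stabilizer of a set `A ⊆ X` for a right action of `G` on `X`: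
`{g ∈ G : x·g = x for all x ∈ A}`. -/
def pointwiseStabilizer (G : Type*) {X : Type*} [Group G] [MulAction Gᵐᵒᵖ X] (A : Set X) :
    Subgroup G where
  carrier := {g : G | ∀ x ∈ A, op g • x = x}
  one_mem' := by intro x _; simp
  mul_mem' := by
    intro g h hg hh x hx
    have h1 : op (g * h) • x = op h • (op g • x) := by
      rw [op_mul, mul_smul]
    rw [h1, hg x hx, hh x hx]
  inv_mem' := by
    intro g hg x hx
    have h1 : op g⁻¹ • (op g • x) = x := by
      rw [op_inv]; exact inv_smul_smul _ _
    rw [hg x hx] at h1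
    exact h1

/-- Rigid stabilizer `R_G(U) = {g ∈ G : x·g = x for all x ∈ X \ U}`. -/
def rigidStabilizer (G : Type*) {X : Type*} [Group G] [MulAction Gᵐᵒᵖ X] (U : Set X) :
    Subgroup G :=
  pointwiseStabilizer G Uᶜ

namespace DCFC

variable {G X : Type*} [Group G] [MulAction Gᵐᵒᵖ X]

lemma smul_op_comp (a b : G) (y : X) : op a • (op b • y) = op (b * a) • y := by
  rw [op_mul, mul_smul]

lemma smul_op_inv_cancel (a : G) (y : X) : op a⁻¹ • (op a • y) = y := by
  rw [smul_op_comp, mul_inv_cancel, op_one, one_smul]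

lemma smul_op_cancel_inv (a : G) (y : X) : op a • (op a⁻¹ • y) = y := by
  rw [smul_op_comp, inv_mul_cancel, op_one, one_smul]

lemma mem_rigid {A : Set X} {g : G} :
    g ∈ rigidStabilizer G A ↔ ∀ y : X, y ∉ A → op g • y = y := by
  constructor
  · intro hg y hy; exact hg y hy
  · intro hg y hy; exact hg y hy

lemma rigid_fix {A : Set X} {g : G} (hg : g ∈ rigidStabilizer G A) {y : X} (hy : y ∉ A) :
    op g • y = y := mem_rigid.1 hg y hy

lemma rigid_smul_mem {A : Set X} {g : G} (hg : g ∈ rigidStabilizer G A) {y : X} (hy : y ∈ A) :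
    op g • y ∈ A := by
  by_contra hc
  have h1 : op g⁻¹ • (op g • y) = op g • y :=
    rigid_fix (inv_mem hg) hc
  rw [smul_op_inv_cancel] at h1
  exact hc (h1 ▸ hy)

lemma rigid_smul_mem_iff {A : Set X} {g : G} (hg : g ∈ rigidStabilizer G A) {y : X} :
    op g • y ∈ A ↔ y ∈ A := by
  constructor
  · intro h; by_contra hc
    rw [rigid_fix hg hc] at h; exact hc h
  · exact rigid_smul_mem hg

lemma rigid_mono {A B : Set X} (h : A ⊆ B) :
    rigidStabilizer G A ≤ rigidStabilizer G B := by
  intro g hg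
  exact mem_rigid.2 fun y hy => rigid_fix hg (fun hyA => hy (h hyA))

/-- The right translate `A·t` of a set. -/
def Atr (A : Set X) (t : G) : Set X := {y : X | op t⁻¹ • y ∈ A}

lemma mem_Atr {A : Set X} {t : G} {y : X} : y ∈ Atr A t ↔ op t⁻¹ • y ∈ A := Iff.rfl

lemma smul_mem_Atr {A : Set X} {t : G} {y : X} (hy : y ∈ A) : op t • y ∈ Atr A t := by
  rw [mem_Atr, smul_op_comp, mul_inv_cancel, op_one, one_smul]; exact hy

lemma Atr_comp (A : Set X) (a b : G) : Atr (Atr A a) b = Atr A (a * b) := by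
  ext y
  simp only [mem_Atr, smul_op_comp, mul_inv_rev]

lemma Atr_one (A : Set X) : Atr A (1 : G) = A := by
  ext y; simp [mem_Atr]

lemma Atr_mono {A B : Set X} (h : A ⊆ B) (t : G) : Atr A t ⊆ Atr B t :=
  fun _ hy => h hy

lemma Atr_of_rigid {B : Set X} {t : G} (ht : t ∈ rigidStabilizer G B) : Atr B t = B := by
  ext y
  rw [mem_Atr]
  exact rigid_smul_mem_iff (inv_mem ht)

lemma Atr_subset_of_le {A B : Set X} (hAB : A ⊆ B) {t : G} (ht : t ∈ rigidStabilizer G B) :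
    Atr A t ⊆ B := by
  intro y hy
  have := Atr_mono hAB t hy
  rwa [Atr_of_rigid ht] at this

lemma Atr_disjoint {A B : Set X} (h : A ∩ B = ∅) (c : G) : Atr A c ∩ Atr B c = ∅ := by
  ext y
  simp only [Set.mem_inter_iff, mem_Atr, Set.mem_empty_iff_false, iff_false]
  intro ⟨h1, h2⟩
  have : op c⁻¹ • y ∈ A ∩ B := ⟨h1, h2⟩
  rw [h] at this; exact this

lemma conj_rigid {A : Set X} {g : G} (hg : g ∈ rigidStabilizer G A) (t : G) :
    t⁻¹ * g * t ∈ rigidStabilizer G (Atr A t) := by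
  refine mem_rigid.2 fun y hy => ?_
  have hz : op t⁻¹ • y ∉ A := hy
  calc op (t⁻¹ * g * t) • y = op t • (op g • (op t⁻¹ • y)) := by
        rw [smul_op_comp, smul_op_comp, mul_assoc]
      _ = op t • (op t⁻¹ • y) := by rw [rigid_fix hg hz]
      _ = y := smul_op_cancel_inv t y

/-- elements with disjoint "supports" commute (uses faithfulness). -/
lemma commute_of_disjoint (hfaith : ∀ g : G, (∀ x : X, op g • x = x) → g = 1)
    {A B : Set X} (hAB : A ∩ B = ∅) {f h : G}
    (hf : f ∈ rigidStabilizer G A) (hh : h ∈ rigidStabilizer G B) :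
    f * h = h * f := by
  have hdisj : ∀ y : X, y ∈ A → y ∉ B := by
    intro y hyA hyB
    have : y ∈ A ∩ B := ⟨hyA, hyB⟩
    rw [hAB] at this; exact this
  have key : ∀ y : X, op h • (op f • y) = op f • (op h • y) := by
    intro y
    by_cases hyA : y ∈ A
    · have hyB : y ∉ B := hdisj y hyA
      have h2 : op f • y ∈ A := rigid_smul_mem hf hyA
      rw [rigid_fix hh (hdisj _ h2), rigid_fix hh hyB]
    · by_cases hyB : y ∈ B
      · have h2 : op h • y ∈ B := rigid_smul_mem hh hyB
        have h2A : op h • y ∉ A := fun hA => hdisj _ hA h2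
        rw [rigid_fix hf hyA, rigid_fix hf h2A]
      · rw [rigid_fix hf hyA, rigid_fix hh hyB, rigid_fix hf hyA]
  have main : (h * f)⁻¹ * (f * h) = 1 := by
    apply hfaith
    intro z
    have e1 : op ((h * f)⁻¹ * (f * h)) • z = op (f * h) • (op (h * f)⁻¹ • z) := by
      rw [smul_op_comp]
    rw [e1]
    set w := op (h * f)⁻¹ • z with hw
    have e2 : op (f * h) • w = op h • (op f • w) := (smul_op_comp h f w).symm
    have e3 : op (h * f) • w = z := by rw [hw, smul_op_cancel_inv]
    rw [e2, key w]
    calc op f • op h • w = op (h * f) • w := smul_op_comp f h w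
      _ = z := e3
  have := inv_mul_eq_one.mp main
  exact this.symm



section Orbit

variable {G X : Type*} [Group G] [MulAction Gᵐᵒᵖ X] [TopologicalSpace X]

/-- Transfer of infinite orbits to the finite-index subgroup `K`. -/
lemma orbit_transfer {U : Set X} (K : Subgroup G)
    (hKfi : K.relIndex (rigidStabilizer G U) ≠ 0) {x : X}
    (horb : ∀ V : Set X, IsOpen V → x ∈ V → V ⊆ U →
      {y : X | ∃ g ∈ rigidStabilizer G V, y = op g • x}.Infinite)
    (V : Set X) (hVo : IsOpen V) (hxV : x ∈ V) (hVU : V ⊆ U) :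
    {y : X | ∃ g ∈ K ⊓ rigidStabilizer G V, y = op g • x}.Infinite := by
  set H := rigidStabilizer G U with hH
  set Δ := rigidStabilizer G V with hΔ
  have hΔH : Δ ≤ H := rigid_mono hVU
  have hfin : Finite (H ⧸ K.subgroupOf H) := by
    have h1 : Nat.card (H ⧸ K.subgroupOf H) ≠ 0 := hKfi
    exact (Nat.card_ne_zero.mp h1).2
  have hfin2 : Finite (Δ ⧸ K.subgroupOf Δ) :=
    Finite.of_injective _ (Subgroup.quotientSubgroupOfEmbeddingOfLE K hΔH).injective
  by_contra hinf
  rw [Set.not_infinite] at hinf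
  have cover : {y : X | ∃ g ∈ Δ, y = op g • x} ⊆
      ⋃ q : Δ ⧸ K.subgroupOf Δ,
        (fun y => op (((Quotient.out q : Δ) : G))⁻¹ • y) ''
          {y : X | ∃ g ∈ K ⊓ Δ, y = op g • x} := by
    rintro y ⟨g, hg, rfl⟩
    set gd : Δ := ⟨g, hg⟩ with hgd
    refine Set.mem_iUnion.2 ⟨QuotientGroup.mk gd⁻¹, ?_⟩
    set r : Δ := Quotient.out (QuotientGroup.mk gd⁻¹ : Δ ⧸ K.subgroupOf Δ) with hr
    have hmk : (QuotientGroup.mk r : Δ ⧸ K.subgroupOf Δ) = QuotientGroup.mk gd⁻¹ := by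
      rw [hr]; exact QuotientGroup.out_eq' _
    have hmem : r⁻¹ * gd⁻¹ ∈ K.subgroupOf Δ := by
      rwa [QuotientGroup.eq] at hmk
    set γ : Δ := r⁻¹ * gd⁻¹ with hγ
    have hγK : (γ : G) ∈ K := Subgroup.mem_subgroupOf.mp hmem
    have hgeq : g = (γ : G)⁻¹ * ((r : G))⁻¹ := by
      have : (gd : G) = ((γ⁻¹ * r⁻¹ : Δ) : G) := by
        rw [hγ]; push_cast; group
      simpa using this
    refine ⟨op ((γ : G))⁻¹ • x, ⟨(γ : G)⁻¹, ?_, rfl⟩, ?_⟩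
    · have hmem2 : (γ : G) ∈ K ⊓ Δ := ⟨hγK, γ.2⟩
      exact inv_mem hmem2
    · show op ((r : G))⁻¹ • (op ((γ : G))⁻¹ • x) = op g • x
      rw [smul_op_comp, ← hgeq]
  have hfinU : (⋃ q : Δ ⧸ K.subgroupOf Δ,
      (fun y => op (((Quotient.out q : Δ) : G))⁻¹ • y) ''
        {y : X | ∃ g ∈ K ⊓ Δ, y = op g • x}).Finite :=
    Set.finite_iUnion (fun q => hinf.image _)
  exact ((horb V hVo hxV hVU).mono cover) hfinU

/-- There is an element of `K ⊓ R(V)` moving `x` outside a given finite set. -/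
lemma exists_fresh {U : Set X} (K : Subgroup G)
    (hKfi : K.relIndex (rigidStabilizer G U) ≠ 0) {x : X}
    (horb : ∀ V : Set X, IsOpen V → x ∈ V → V ⊆ U →
      {y : X | ∃ g ∈ rigidStabilizer G V, y = op g • x}.Infinite)
    (V : Set X) (hVo : IsOpen V) (hxV : x ∈ V) (hVU : V ⊆ U)
    (F : Set X) (hF : F.Finite) :
    ∃ g ∈ K ⊓ rigidStabilizer G V, op g • x ∉ F := by
  have h1 := (orbit_transfer K hKfi horb V hVo hxV hVU).diff hF
  obtain ⟨y, ⟨⟨g, hg, rfl⟩, hyF⟩⟩ := h1.nonempty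
  exact ⟨g, hg, hyF⟩

/-- A family of `n` elements of `K ⊓ R(V)` with pairwise distinct images of `x`. -/
lemma exists_family {U : Set X} (K : Subgroup G)
    (hKfi : K.relIndex (rigidStabilizer G U) ≠ 0) {x : X}
    (horb : ∀ V : Set X, IsOpen V → x ∈ V → V ⊆ U →
      {y : X | ∃ g ∈ rigidStabilizer G V, y = op g • x}.Infinite)
    (V : Set X) (hVo : IsOpen V) (hxV : x ∈ V) (hVU : V ⊆ U) (n : ℕ) :
    ∃ ts : Fin n → G, (∀ i, ts i ∈ K ⊓ rigidStabilizer G V) ∧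
      (∀ i j, i ≠ j → op (ts i) • x ≠ op (ts j) • x) := by
  induction n with
  | zero => exact ⟨fun i => 1, fun i => i.elim0, fun i => i.elim0⟩
  | succ n ih =>
    obtain ⟨ts, hts1, hts2⟩ := ih
    obtain ⟨g, hg, hgF⟩ := exists_fresh K hKfi horb V hVo hxV hVU
      (Set.range (fun i : Fin n => op (ts i) • x)) (Set.finite_range _)
    refine ⟨Fin.snoc ts g, ?_, ?_⟩
    · intro i
      rcases Fin.eq_castSucc_or_eq_last i with ⟨i', rfl⟩ | rfl
      · simp only [Fin.snoc_castSucc]; exact hts1 i'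
      · simp only [Fin.snoc_last]; exact hg
    · intro i j hij
      have hfresh : ∀ k : Fin n, op g • x ≠ op (ts k) • x := by
        intro k he
        exact hgF ⟨k, he.symm⟩
      rcases Fin.eq_castSucc_or_eq_last i with ⟨i', rfl⟩ | rfl <;>
        rcases Fin.eq_castSucc_or_eq_last j with ⟨j', rfl⟩ | rfl
      · simp only [Fin.snoc_castSucc]
        exact hts2 i' j' (fun he => hij (by rw [he]))
      · simp only [Fin.snoc_castSucc, Fin.snoc_last]
        exact fun he => hfresh i' he.symm
      · simp only [Fin.snoc_castSucc, Fin.snoc_last]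
        exact hfresh j'
      · exact absurd rfl hij

end Orbit


section Sep

variable {G X : Type*} [Group G] [MulAction Gᵐᵒᵖ X] [TopologicalSpace X] [T2Space X]

/-- Shrink a neighborhood of `x` so that finitely many prescribed pairs of translates
become disjoint. -/
lemma sep_family (hcont : ∀ g : G, Continuous fun x : X => op g • x)
    {x : X} (S : Finset (G × G)) (hS : ∀ p ∈ S, op p.1 • x ≠ op p.2 • x)
    (V : Set X) (hVo : IsOpen V) (hxV : x ∈ V) :
    ∃ W : Set X, IsOpen W ∧ x ∈ W ∧ W ⊆ V ∧
      ∀ p ∈ S, Atr W p.1 ∩ Atr W p.2 = ∅ := by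
  classical
  induction S using Finset.induction_on with
  | empty => exact ⟨V, hVo, hxV, subset_rfl, by simp⟩
  | @insert p S hpS ih =>
    obtain ⟨W₀, hW₀o, hxW₀, hW₀V, hW₀⟩ := ih (fun q hq => hS q (Finset.mem_insert_of_mem hq))
    obtain ⟨O₁, O₂, hO₁, hO₂, hx₁, hx₂, hdisj⟩ :=
      t2_separation (hS p (Finset.mem_insert_self p S))
    refine ⟨W₀ ∩ ((fun y => op p.1 • y) ⁻¹' O₁) ∩ ((fun y => op p.2 • y) ⁻¹' O₂),
      ?_, ⟨⟨hxW₀, hx₁⟩, hx₂⟩, fun y hy => hW₀V hy.1.1, ?_⟩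
    · exact ((hW₀o.inter ((hcont p.1).isOpen_preimage O₁ hO₁)).inter
        ((hcont p.2).isOpen_preimage O₂ hO₂))
    · intro q hq
      rcases Finset.mem_insert.mp hq with rfl | hq'
      · apply Set.eq_empty_of_subset_empty
        intro z hz
        have h1 : z ∈ O₁ := by
          have := hz.1
          rw [mem_Atr] at this
          have h2 := this.1.2
          simpa [smul_op_cancel_inv] using h2
        have h2 : z ∈ O₂ := by
          have := hz.2
          rw [mem_Atr] at this
          have h3 := this.2
          simpa [smul_op_cancel_inv] using h3
        exact (Set.disjoint_iff.mp hdisj ⟨h1, h2⟩)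
      · have hsub : ∀ a : G,
            Atr (W₀ ∩ ((fun y => op p.1 • y) ⁻¹' O₁) ∩ ((fun y => op p.2 • y) ⁻¹' O₂)) a
              ⊆ Atr W₀ a :=
          fun a => Atr_mono (fun y hy => hy.1.1) a
        apply Set.eq_empty_of_subset_empty
        intro z hz
        have : z ∈ Atr W₀ q.1 ∩ Atr W₀ q.2 := ⟨hsub _ hz.1, hsub _ hz.2⟩
        rw [hW₀ q hq'] at this
        exact this

end Sep


section ClaimB

variable {G X : Type*} [Group G] [MulAction Gᵐᵒᵖ X] [TopologicalSpace X] [T2Space X]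

lemma conjN (K N : Subgroup G) (hNle : N ≤ K) (hNnormal : (N.subgroupOf K).Normal)
    {n k : G} (hn : n ∈ N) (hk : k ∈ K) : k * n * k⁻¹ ∈ N := by
  have h1 : (⟨n, hNle hn⟩ : K) ∈ N.subgroupOf K := by
    rw [Subgroup.mem_subgroupOf]; exact hn
  have h2 := hNnormal.conj_mem _ h1 ⟨k, hk⟩
  rw [Subgroup.mem_subgroupOf] at h2
  simpa using h2

/-- Claim B : there is a neighborhood `W_B` of `x` on which all commutators of
elements of `K ⊓ R(W_B)` lie in `N`. -/
lemma claimB (hcont : ∀ g : G, Continuous fun x : X => op g • x)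
    (hfaith : ∀ g : G, (∀ x : X, op g • x = x) → g = 1)
    (U : Set X) (hU : IsOpen U)
    (K N : Subgroup G)
    (hKfi : K.relIndex (rigidStabilizer G U) ≠ 0)
    (hNle : N ≤ K) (hNnormal : (N.subgroupOf K).Normal)
    (hFC : ∀ g ∈ K,
      {c : Set G | ∃ k ∈ K, c = (fun y : G => (k⁻¹ * g * k) * y) '' (N : Set G)}.Finite)
    (x : X) (hx : x ∈ U)
    (horb : ∀ V : Set X, IsOpen V → x ∈ V → V ⊆ U →
      {y : X | ∃ g ∈ rigidStabilizer G V, y = op g • x}.Infinite) :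
    ∃ W : Set X, IsOpen W ∧ x ∈ W ∧ W ⊆ U ∧
      ∀ f h : G, f ∈ K ⊓ rigidStabilizer G W → h ∈ K ⊓ rigidStabilizer G W →
        f * h * f⁻¹ * h⁻¹ ∈ N := by
  classical
  by_contra hc
  push_neg at hc
  -- the one-step construction
  have step : ∀ V : Set X, IsOpen V → x ∈ V → V ⊆ U →
      ∃ (W' : Set X) (t : G), (IsOpen W' ∧ x ∈ W' ∧ W' ⊆ V) ∧
        t ∈ K ⊓ rigidStabilizer G V ∧ Atr W' t ∩ W' = ∅ := by
    intro V hVo hxV hVU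
    obtain ⟨t, htm, htx⟩ := exists_fresh K hKfi horb V hVo hxV hVU {x} (Set.finite_singleton x)
    have htx' : op t • x ≠ x := fun he => htx (by rw [he]; exact rfl)
    obtain ⟨O₂, O₁, hO₂, hO₁, hx₂, hx₁, hdisj⟩ := t2_separation htx'
    refine ⟨V ∩ O₁ ∩ ((fun y => op t • y) ⁻¹' O₂), t,
      ⟨(hVo.inter hO₁).inter ((hcont t).isOpen_preimage O₂ hO₂),
        ⟨⟨hxV, hx₁⟩, hx₂⟩, fun y hy => hy.1.1⟩, htm, ?_⟩
    apply Set.eq_empty_of_subset_empty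
    intro z hz
    have h1 : z ∈ O₂ := by
      have h2 := hz.1
      rw [mem_Atr] at h2
      have h3 := h2.2
      simpa [smul_op_cancel_inv] using h3
    have h2 : z ∈ O₁ := hz.2.1.2
    exact Set.disjoint_iff.mp hdisj ⟨h1, h2⟩
  -- iterate the construction to a chain of neighborhoods with movers
  have hstep' : ∀ p : {p : Set X // IsOpen p ∧ x ∈ p ∧ p ⊆ U},
      ∃ q : {p : Set X // IsOpen p ∧ x ∈ p ∧ p ⊆ U}, ∃ t : G,
        q.1 ⊆ p.1 ∧ t ∈ K ⊓ rigidStabilizer G p.1 ∧ Atr q.1 t ∩ q.1 = ∅ := by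
    intro p
    obtain ⟨W', t, ⟨h1, h2, h3⟩, h4, h5⟩ := step p.1 p.2.1 p.2.2.1 p.2.2.2
    exact ⟨⟨W', h1, h2, h3.trans p.2.2.2⟩, t, h3, h4, h5⟩
  choose σ tf hsub htK hdj using hstep'
  set p₀ : {p : Set X // IsOpen p ∧ x ∈ p ∧ p ⊆ U} := ⟨U, hU, hx, subset_rfl⟩ with hp₀
  set chain : ℕ → {p : Set X // IsOpen p ∧ x ∈ p ∧ p ⊆ U} := fun n => σ^[n] p₀ with hchain
  have chain_succ : ∀ n : ℕ, chain (n + 1) = σ (chain n) := by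
    intro n
    rw [hchain]
    simp only []
    rw [Function.iterate_succ_apply']
  have chmono1 : ∀ n : ℕ, (chain (n + 1)).1 ⊆ (chain n).1 := by
    intro n; rw [chain_succ n]; exact hsub (chain n)
  have chmono : ∀ a b : ℕ, a ≤ b → (chain b).1 ⊆ (chain a).1 := by
    intro a b hab
    induction b, hab using Nat.le_induction with
    | base => exact subset_rfl
    | succ b hab ih => exact (chmono1 b).trans ih
  -- the bad pairs
  have hbd : ∀ n : ℕ, ∃ f h : G, f ∈ K ⊓ rigidStabilizer G (chain n).1 ∧
      h ∈ K ⊓ rigidStabilizer G (chain n).1 ∧ f * h * f⁻¹ * h⁻¹ ∉ N := by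
    intro n
    obtain ⟨f, h, h1, h2, h3⟩ := hc (chain n).1 (chain n).2.1 (chain n).2.2.1 (chain n).2.2.2
    exact ⟨f, h, h1, h2, h3⟩
  choose ff hh hfm hhm hbadn using hbd
  -- the base mover t
  set t : G := tf p₀ with ht
  have htKmem : t ∈ K := (htK p₀).1
  have hchain0 : chain 0 = p₀ := rfl
  set W₁ : Set X := (chain 1).1 with hW₁
  have hdisj₁ : Atr W₁ t ∩ W₁ = ∅ := by
    have := hdj p₀
    rw [hW₁, chain_succ 0, hchain0]
    exact this
  have hvR : t ∈ rigidStabilizer G W₁ ∨ True := Or.inr trivial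
  -- level data (level n corresponds to the neighborhood chain (n+2))
  set Wn : ℕ → Set X := fun n => (chain (n + 2)).1 with hWn
  set mv : ℕ → G := fun n => tf (chain (n + 1)) with hmv
  have hmvK : ∀ n, mv n ∈ K := fun n => (htK (chain (n + 1))).1
  have hmvR : ∀ n, mv n ∈ rigidStabilizer G (chain (n + 1)).1 :=
    fun n => (htK (chain (n + 1))).2
  have hmvdisj : ∀ n, Atr (Wn n) (mv n) ∩ Wn n = ∅ := by
    intro n
    have := hdj (chain (n + 1))
    rw [hWn]
    simp only []
    rw [chain_succ (n + 1)]
    exact this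
  have hWnsub : ∀ n, Wn n ⊆ (chain (n + 1)).1 := fun n => chmono1 (n + 1)
  have hAtrsub : ∀ n, Atr (Wn n) (mv n) ⊆ (chain (n + 1)).1 :=
    fun n => Atr_subset_of_le (hWnsub n) (hmvR n)
  have hAtrW₁ : ∀ n, Atr (Wn n) (mv n) ⊆ W₁ := by
    intro n
    exact (hAtrsub n).trans (chmono 1 (n + 1) (by omega))
  set An : ℕ → G := fun n => (mv n)⁻¹ * ff (n + 2) * mv n with hAn
  set Bn : ℕ → G := fun n => (mv n)⁻¹ * hh (n + 2) * mv n with hBn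
  have hAnR : ∀ n, An n ∈ rigidStabilizer G (Atr (Wn n) (mv n)) :=
    fun n => conj_rigid (hfm (n + 2)).2 (mv n)
  have hBnR : ∀ n, Bn n ∈ rigidStabilizer G (Atr (Wn n) (mv n)) :=
    fun n => conj_rigid (hhm (n + 2)).2 (mv n)
  have hAnK : ∀ n, An n ∈ K :=
    fun n => mul_mem (mul_mem (inv_mem (hmvK n)) (hfm (n + 2)).1) (hmvK n)
  have hBnK : ∀ n, Bn n ∈ K :=
    fun n => mul_mem (mul_mem (inv_mem (hmvK n)) (hhm (n + 2)).1) (hmvK n)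
  -- FC pigeonhole on conjugates of t by the Bn
  have hCfin := hFC t htKmem
  haveI := hCfin.to_subtype
  set φ : ℕ → {c : Set G | ∃ k ∈ K, c = (fun y : G => (k⁻¹ * t * k) * y) '' (N : Set G)} :=
    fun n => ⟨(fun y : G => ((Bn n)⁻¹ * t * Bn n) * y) '' (N : Set G),
      ⟨Bn n, hBnK n, rfl⟩⟩ with hφ
  obtain ⟨a, b, hab, heq⟩ := Finite.exists_ne_map_eq_of_infinite φ
  -- symmetric contradiction kernel
  have contra : ∀ a b : ℕ, a < b → φ a = φ b → False := by
    intro a b hlt heq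
    have heqset : (fun y : G => ((Bn a)⁻¹ * t * Bn a) * y) '' (N : Set G) =
        (fun y : G => ((Bn b)⁻¹ * t * Bn b) * y) '' (N : Set G) := by
      have := congrArg Subtype.val heq
      simpa [hφ] using this
    -- extract the N-element relating the two conjugates
    have hmem1 : ((Bn a)⁻¹ * t * Bn a) * 1 ∈
        (fun y : G => ((Bn a)⁻¹ * t * Bn a) * y) '' (N : Set G) :=
      ⟨1, N.one_mem, rfl⟩
    rw [heqset] at hmem1
    obtain ⟨n₀', hn₀'N, hn₀'⟩ := hmem1
    have hn₀eq : n₀' = ((Bn b)⁻¹ * t * Bn b)⁻¹ * ((Bn a)⁻¹ * t * Bn a) := by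
      have h : ((Bn b)⁻¹ * t * Bn b) * n₀' = ((Bn a)⁻¹ * t * Bn a) * 1 := hn₀'
      rw [mul_one] at h
      rw [← h]
      group
    set n₀ : G := ((Bn b)⁻¹ * t * Bn b)⁻¹ * ((Bn a)⁻¹ * t * Bn a) with hn₀
    have hn₀N : n₀ ∈ N := hn₀eq ▸ hn₀'N
    set v : G := Bn a * (Bn b)⁻¹ with hv
    have hvK : v ∈ K := mul_mem (hBnK a) (inv_mem (hBnK b))
    set n₁ : G := Bn b * n₀⁻¹ * (Bn b)⁻¹ with hn₁
    have hn₁N : n₁ ∈ N := conjN K N hNle hNnormal (inv_mem hn₀N) (hBnK b)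
    have alg1 : t⁻¹ * v * t = v * n₁ := by
      rw [hn₁, hn₀, hv]; group
    -- support facts
    have hvR : v ∈ rigidStabilizer G W₁ :=
      mul_mem (rigid_mono (hAtrW₁ a) (hBnR a)) (inv_mem (rigid_mono (hAtrW₁ b) (hBnR b)))
    have hconjvR : t⁻¹ * v * t ∈ rigidStabilizer G (Atr W₁ t) := conj_rigid hvR t
    have hAaW₁ : An a ∈ rigidStabilizer G W₁ := rigid_mono (hAtrW₁ a) (hAnR a)
    have com1 : An a * (t⁻¹ * v * t) = (t⁻¹ * v * t) * An a := by
      apply commute_of_disjoint hfaith _ hAaW₁ hconjvR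
      rw [Set.inter_comm]; exact hdisj₁
    have hBbWa : Bn b ∈ rigidStabilizer G (Wn a) := by
      apply rigid_mono _ (hBnR b)
      exact (hAtrsub b).trans (chmono (a + 2) (b + 1) (by omega))
    have com2 : An a * Bn b = Bn b * An a := by
      apply commute_of_disjoint hfaith (hmvdisj a) (hAnR a) hBbWa
    -- algebra: [An a, Bn a] = v * (n₁ * (An a * n₁⁻¹ * (An a)⁻¹)) * v⁻¹
    have c1 : An a * (v * n₁) = (v * n₁) * An a := by rw [← alg1]; exact com1
    have hAv : An a * v = v * n₁ * An a * n₁⁻¹ := by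
      calc An a * v = An a * (v * n₁) * n₁⁻¹ := by group
        _ = (v * n₁) * An a * n₁⁻¹ := by rw [c1]
    have hBa : Bn a = v * Bn b := by rw [hv]; group
    have keyeq : An a * Bn a * (An a)⁻¹ * (Bn a)⁻¹ =
        v * (n₁ * (An a * n₁⁻¹ * (An a)⁻¹)) * v⁻¹ := by
      have c2' : Commute (An a) (Bn b) := com2
      have c2i : Bn b * (An a)⁻¹ = (An a)⁻¹ * Bn b := (c2'.inv_left).eq.symm
      calc An a * Bn a * (An a)⁻¹ * (Bn a)⁻¹
          = An a * v * (Bn b * (An a)⁻¹) * ((Bn b)⁻¹ * v⁻¹) := by rw [hBa]; group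
        _ = An a * v * ((An a)⁻¹ * Bn b) * ((Bn b)⁻¹ * v⁻¹) := by rw [c2i]
        _ = An a * v * (An a)⁻¹ * v⁻¹ := by group
        _ = (v * n₁ * An a * n₁⁻¹) * (An a)⁻¹ * v⁻¹ := by rw [hAv]
        _ = v * (n₁ * (An a * n₁⁻¹ * (An a)⁻¹)) * v⁻¹ := by group
    have hinN : An a * Bn a * (An a)⁻¹ * (Bn a)⁻¹ ∈ N := by
      rw [keyeq]
      exact conjN K N hNle hNnormal
        (mul_mem hn₁N (conjN K N hNle hNnormal (inv_mem hn₁N) (hAnK a))) hvK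
    -- transport back to the original pair
    have hxi : ff (a + 2) * hh (a + 2) * (ff (a + 2))⁻¹ * (hh (a + 2))⁻¹ =
        mv a * (An a * Bn a * (An a)⁻¹ * (Bn a)⁻¹) * (mv a)⁻¹ := by
      rw [hAn, hBn]
      simp only []
      group
    have : ff (a + 2) * hh (a + 2) * (ff (a + 2))⁻¹ * (hh (a + 2))⁻¹ ∈ N := by
      rw [hxi]
      exact conjN K N hNle hNnormal hinN (hmvK a)
    exact hbadn (a + 2) this
  rcases lt_or_gt_of_ne hab with h | h
  · exact contra a b h heq
  · exact contra b a h heq.symm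

end ClaimB


section Main

variable {G X : Type*} [Group G] [MulAction Gᵐᵒᵖ X] [TopologicalSpace X] [T2Space X]

lemma Atr_mul_inv_disjoint {W : Set X} {a b : G} (h : Atr W a ∩ Atr W b = ∅) :
    Atr W (a * b⁻¹) ∩ W = ∅ := by
  have h2 := Atr_disjoint h b⁻¹
  rw [Atr_comp, Atr_comp, mul_inv_cancel, Atr_one] at h2
  exact h2

lemma comm_identity {G' : Type*} [Group G'] {f d h d' : G'}
    (h1 : d * h = h * d) (h2 : d * d' = d' * d) (h3 : d' * f = f * d') :
    (f * d) * (h * d') * (f * d)⁻¹ * (h * d')⁻¹ = f * h * f⁻¹ * h⁻¹ := by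
  have c3 : Commute d' f := h3
  have h3' : d' * f⁻¹ = f⁻¹ * d' := (c3.inv_right).eq
  calc (f * d) * (h * d') * (f * d)⁻¹ * (h * d')⁻¹
      = f * (d * h) * d' * d⁻¹ * f⁻¹ * d'⁻¹ * h⁻¹ := by group
    _ = f * (h * d) * d' * d⁻¹ * f⁻¹ * d'⁻¹ * h⁻¹ := by rw [h1]
    _ = f * h * (d * d') * d⁻¹ * f⁻¹ * d'⁻¹ * h⁻¹ := by group
    _ = f * h * (d' * d) * d⁻¹ * f⁻¹ * d'⁻¹ * h⁻¹ := by rw [h2]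
    _ = f * h * (d' * f⁻¹) * d'⁻¹ * h⁻¹ := by group
    _ = f * h * (f⁻¹ * d') * d'⁻¹ * h⁻¹ := by rw [h3']
    _ = f * h * f⁻¹ * h⁻¹ := by group

lemma pigeon (U : Set X) (K : Subgroup G)
    (hKfi : K.relIndex (rigidStabilizer G U) ≠ 0) (m : ℕ) (hm : K.relIndex (rigidStabilizer G U) ≤ m)
    (f : G) (hf : f ∈ rigidStabilizer G U)
    (vs : Fin (m + 1) → G) (hvs : ∀ i, vs i ∈ rigidStabilizer G U) :
    ∃ i j : Fin (m + 1), i ≠ j ∧ f * (vs i * (vs j)⁻¹) * f⁻¹ ∈ K := by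
  classical
  set H := rigidStabilizer G U with hH
  have hfin : Finite (H ⧸ K.subgroupOf H) := by
    have h1 : Nat.card (H ⧸ K.subgroupOf H) ≠ 0 := hKfi
    exact (Nat.card_ne_zero.mp h1).2
  haveI := Fintype.ofFinite (H ⧸ K.subgroupOf H)
  set φ : Fin (m + 1) → (H ⧸ K.subgroupOf H) := fun i =>
    QuotientGroup.mk ⟨(f * vs i * f⁻¹)⁻¹,
      inv_mem (mul_mem (mul_mem hf (hvs i)) (inv_mem hf))⟩ with hφ
  have hcard : Fintype.card (H ⧸ K.subgroupOf H) < Fintype.card (Fin (m + 1)) := by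
    rw [Fintype.card_fin]
    have h2 : Nat.card (H ⧸ K.subgroupOf H) ≤ m := hm
    rw [Nat.card_eq_fintype_card] at h2
    omega
  obtain ⟨i, j, hij, hphi⟩ := Fintype.exists_ne_map_eq_of_card_lt φ hcard
  refine ⟨i, j, hij, ?_⟩
  rw [hφ] at hphi
  simp only [] at hphi
  rw [QuotientGroup.eq] at hphi
  rw [Subgroup.mem_subgroupOf] at hphi
  have h3 : ((f * vs i * f⁻¹)⁻¹)⁻¹ * (f * vs j * f⁻¹)⁻¹ ∈ K := hphi
  have h4 : (f * vs i * f⁻¹) * (f * vs j * f⁻¹)⁻¹ ∈ K := by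
    simpa using h3
  have h5 : (f * vs i * f⁻¹) * (f * vs j * f⁻¹)⁻¹ = f * (vs i * (vs j)⁻¹) * f⁻¹ := by group
  rwa [h5] at h4

end Main

end DCFC

/-- **Lemma 3.4 (variant of the double commutator lemma).**
Let `G` be a countable group acting faithfully by homeomorphisms on a second countable
Hausdorff space `X` (encoded as a left action of `Gᵐᵒᵖ`, so `x·g = op g • x`).
Let `U` be open, `K` a finite-index subgroup of `R_G(U)`, and `N` a normal subgroup of
`K` with `K/N` an FC-group (expressed by finiteness of the sets of cosets
`{(k⁻¹gk)N : k ∈ K}`).  If `x ∈ U` is such that the orbit `x·R_G(V)` is infinite for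
every open `V` with `x ∈ V ⊆ U`, then there is an open neighborhood `W` of `x` with
`[R_G(W), R_G(W)] ≤ N`. -/
theorem double_commutator_fc_quotient
    {G X : Type*} [Group G] [Countable G] [TopologicalSpace X]
    [SecondCountableTopology X] [T2Space X] [MulAction Gᵐᵒᵖ X]
    (hcont : ∀ g : G, Continuous fun x : X => op g • x)
    (hfaith : ∀ g : G, (∀ x : X, op g • x = x) → g = 1)
    (U : Set X) (hU : IsOpen U)
    (K N : Subgroup G)
    (hKle : K ≤ rigidStabilizer G U)
    (hKfi : K.relIndex (rigidStabilizer G U) ≠ 0)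
    (hNle : N ≤ K) (hNnormal : (N.subgroupOf K).Normal)
    (hFC : ∀ g ∈ K,
      {c : Set G | ∃ k ∈ K, c = (fun y : G => (k⁻¹ * g * k) * y) '' (N : Set G)}.Finite)
    (x : X) (hx : x ∈ U)
    (horb : ∀ V : Set X, IsOpen V → x ∈ V → V ⊆ U →
      {y : X | ∃ g ∈ rigidStabilizer G V, y = op g • x}.Infinite) :
    ∃ W : Set X, IsOpen W ∧ x ∈ W ∧
      ⁅rigidStabilizer G W, rigidStabilizer G W⁆ ≤ N := by
  classical
  obtain ⟨WB, hWBo, hxWB, hWBU, hWB⟩ :=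
    DCFC.claimB hcont hfaith U hU K N hKfi hNle hNnormal hFC x hx horb
  set m := K.relIndex (rigidStabilizer G U) with hmdef
  obtain ⟨ts, hts1, hts2⟩ := DCFC.exists_family K hKfi horb WB hWBo hxWB hWBU (m + 1)
  have hpx : ∀ i j : Fin (m + 1), i ≠ j → op (ts j * (ts i)⁻¹) • x ≠ x := by
    intro i j hij he
    apply hts2 j i (fun hji => hij hji.symm)
    have h1 : op (ts i)⁻¹ • (op (ts j) • x) = x := by
      rw [DCFC.smul_op_comp]; exact he
    have h2 := congrArg (fun z => op (ts i) • z) h1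
    beta_reduce at h2
    rw [DCFC.smul_op_cancel_inv] at h2
    exact h2
  have hsep : ∀ i j : Fin (m + 1), i ≠ j → ∃ Qp : Set X × Set X, IsOpen Qp.1 ∧ IsOpen Qp.2 ∧
      op (ts j * (ts i)⁻¹) • x ∈ Qp.1 ∧ x ∈ Qp.2 ∧ Qp.1 ∩ Qp.2 = ∅ := by
    intro i j hij
    obtain ⟨Qa, Qb, h1, h2, h3, h4, h5⟩ := t2_separation (hpx i j hij)
    exact ⟨(Qa, Qb), h1, h2, h3, h4, Set.disjoint_iff_inter_eq_empty.mp h5⟩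
  choose Qp hQo hQ'o hpQ hxQ' hQQ' using hsep
  set Q : ∀ i j : Fin (m + 1), i ≠ j → Set X := fun i j hij => (Qp i j hij).1 with hQdef
  set Q' : ∀ i j : Fin (m + 1), i ≠ j → Set X := fun i j hij => (Qp i j hij).2 with hQ'def
  set P₀ : Set X := WB ∩ ⋂ ij : Fin (m + 1) × Fin (m + 1),
    (if h : ij.1 ≠ ij.2 then Q' ij.1 ij.2 h else Set.univ) with hP₀def
  have hP₀o : IsOpen P₀ := hWBo.inter (isOpen_iInter_of_finite fun ij => by
    by_cases h : ij.1 ≠ ij.2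
    · rw [dif_pos h]; exact hQ'o _ _ h
    · rw [dif_neg h]; exact isOpen_univ)
  have hxP₀ : x ∈ P₀ := ⟨hxWB, Set.mem_iInter.mpr fun ij => by
    by_cases h : ij.1 ≠ ij.2
    · rw [dif_pos h]; exact hxQ' _ _ h
    · rw [dif_neg h]; exact Set.mem_univ x⟩
  have hP₀WB : P₀ ⊆ WB := fun y hy => hy.1
  have hP₀U : P₀ ⊆ U := hP₀WB.trans hWBU
  have hP₀Q' : ∀ i j (hij : i ≠ j), P₀ ⊆ Q' i j hij := by
    intro i j hij y hy
    have h1 := Set.mem_iInter.mp hy.2 (i, j)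
    rwa [dif_pos hij] at h1
  obtain ⟨us, hus1, hus2⟩ := DCFC.exists_family K hKfi horb P₀ hP₀o hxP₀ hP₀U (m + 1)
  set S : Finset (G × G) :=
    ((Finset.univ.filter (fun ij : Fin (m + 1) × Fin (m + 1) => ij.1 ≠ ij.2)).image
      (fun ij => (ts ij.1, ts ij.2))) ∪
    ((Finset.univ.filter (fun ij : Fin (m + 1) × Fin (m + 1) => ij.1 ≠ ij.2)).image
      (fun ij => (us ij.1, us ij.2))) with hSdef
  have hS : ∀ p ∈ S, op p.1 • x ≠ op p.2 • x := by
    intro p hp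
    rcases Finset.mem_union.mp hp with hp | hp
    · obtain ⟨ij, hij, rfl⟩ := Finset.mem_image.mp hp
      exact hts2 _ _ (Finset.mem_filter.mp hij).2
    · obtain ⟨ij, hij, rfl⟩ := Finset.mem_image.mp hp
      exact hus2 _ _ (Finset.mem_filter.mp hij).2
  set Vpre : Set X := ⋂ ij : Fin (m + 1) × Fin (m + 1),
    (if h : ij.1 ≠ ij.2 then (fun y => op (ts ij.2 * (ts ij.1)⁻¹) • y) ⁻¹' (Q ij.1 ij.2 h)
     else Set.univ) with hVpredef
  have hVpreo : IsOpen Vpre := isOpen_iInter_of_finite fun ij => by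
    by_cases h : ij.1 ≠ ij.2
    · rw [dif_pos h]; exact (hcont _).isOpen_preimage _ (hQo _ _ h)
    · rw [dif_neg h]; exact isOpen_univ
  have hxVpre : x ∈ Vpre := Set.mem_iInter.mpr fun ij => by
    by_cases h : ij.1 ≠ ij.2
    · rw [dif_pos h]; exact hpQ _ _ h
    · rw [dif_neg h]; exact Set.mem_univ x
  obtain ⟨W, hWo, hxW, hWsub, hWS⟩ := DCFC.sep_family hcont S hS (P₀ ∩ Vpre)
    (hP₀o.inter hVpreo) ⟨hxP₀, hxVpre⟩
  have hWP₀ : W ⊆ P₀ := fun y hy => (hWsub hy).1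
  have hWVpre : W ⊆ Vpre := fun y hy => (hWsub hy).2
  have hWWB : W ⊆ WB := hWP₀.trans hP₀WB
  have hWU : W ⊆ U := hWWB.trans hWBU
  have hts_pair : ∀ i j : Fin (m + 1), i ≠ j →
      DCFC.Atr W (ts i) ∩ DCFC.Atr W (ts j) = ∅ := by
    intro i j hij
    apply hWS (ts i, ts j)
    apply Finset.mem_union_left
    exact Finset.mem_image.mpr ⟨(i, j), Finset.mem_filter.mpr ⟨Finset.mem_univ _, hij⟩, rfl⟩
  have hus_pair : ∀ i j : Fin (m + 1), i ≠ j →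
      DCFC.Atr W (us i) ∩ DCFC.Atr W (us j) = ∅ := by
    intro i j hij
    apply hWS (us i, us j)
    apply Finset.mem_union_right
    exact Finset.mem_image.mpr ⟨(i, j), Finset.mem_filter.mpr ⟨Finset.mem_univ _, hij⟩, rfl⟩
  have hregQ : ∀ i j (hij : i ≠ j), DCFC.Atr W (ts j * (ts i)⁻¹) ⊆ Q i j hij := by
    intro i j hij z hz
    rw [DCFC.mem_Atr] at hz
    have h1 : op (ts j * (ts i)⁻¹)⁻¹ • z ∈ Vpre := hWVpre hz
    have h2 := Set.mem_iInter.mp h1 (i, j)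
    rw [dif_pos hij] at h2
    have h3 : op (ts j * (ts i)⁻¹) • (op (ts j * (ts i)⁻¹)⁻¹ • z) ∈ Q i j hij := h2
    rwa [DCFC.smul_op_cancel_inv] at h3
  have hregP : ∀ k l : Fin (m + 1), DCFC.Atr W (us l * (us k)⁻¹) ⊆ P₀ :=
    fun k l => DCFC.Atr_subset_of_le hWP₀ (mul_mem (hus1 l).2 (inv_mem (hus1 k).2))
  have hcross : ∀ i j (hij : i ≠ j) k l (hkl : k ≠ l),
      DCFC.Atr W (ts j * (ts i)⁻¹) ∩ DCFC.Atr W (us l * (us k)⁻¹) = ∅ := by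
    intro i j hij k l hkl
    apply Set.eq_empty_of_subset_empty
    intro z hz
    have h1 : z ∈ Q i j hij := hregQ i j hij hz.1
    have h2 : z ∈ Q' i j hij := hP₀Q' i j hij (hregP k l hz.2)
    have h3 : z ∈ Q i j hij ∩ Q' i j hij := ⟨h1, h2⟩
    rwa [hQQ' i j hij] at h3
  refine ⟨W, hWo, hxW, Subgroup.commutator_le.mpr ?_⟩
  intro f hf h hh
  rw [commutatorElement_def]
  have hfRW : f ∈ rigidStabilizer G W := hf
  have hhRW : h ∈ rigidStabilizer G W := hh
  have hfH : f ∈ rigidStabilizer G U := DCFC.rigid_mono hWU hfRW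
  have hhH : h ∈ rigidStabilizer G U := DCFC.rigid_mono hWU hhRW
  obtain ⟨i, j, hij, hsK⟩ := DCFC.pigeon U K hKfi m le_rfl f hfH ts
    (fun i => DCFC.rigid_mono hWBU (hts1 i).2)
  obtain ⟨k, l, hkl, hs'K⟩ := DCFC.pigeon U K hKfi m le_rfl h hhH us
    (fun k => DCFC.rigid_mono hP₀U (hus1 k).2)
  set s : G := ts i * (ts j)⁻¹ with hs
  set s' : G := us k * (us l)⁻¹ with hs'
  have hsKm : s ∈ K := mul_mem (hts1 i).1 (inv_mem (hts1 j).1)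
  have hs'Km : s' ∈ K := mul_mem (hus1 k).1 (inv_mem (hus1 l).1)
  have hsRB : s ∈ rigidStabilizer G WB := mul_mem (hts1 i).2 (inv_mem (hts1 j).2)
  have hs'RB : s' ∈ rigidStabilizer G WB :=
    mul_mem (DCFC.rigid_mono hP₀WB (hus1 k).2) (inv_mem (DCFC.rigid_mono hP₀WB (hus1 l).2))
  set d : G := s * f⁻¹ * s⁻¹ with hd
  set d' : G := s' * h⁻¹ * s'⁻¹ with hd'
  have hdR : d ∈ rigidStabilizer G (DCFC.Atr W s⁻¹) := by
    have h1 := DCFC.conj_rigid (inv_mem hfRW) s⁻¹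
    rw [inv_inv] at h1
    exact h1
  have hd'R : d' ∈ rigidStabilizer G (DCFC.Atr W s'⁻¹) := by
    have h1 := DCFC.conj_rigid (inv_mem hhRW) s'⁻¹
    rw [inv_inv] at h1
    exact h1
  have hsinv : s⁻¹ = ts j * (ts i)⁻¹ := by rw [hs]; group
  have hs'inv : s'⁻¹ = us l * (us k)⁻¹ := by rw [hs']; group
  have dis1 : DCFC.Atr W s⁻¹ ∩ W = ∅ := by
    rw [hsinv]; exact DCFC.Atr_mul_inv_disjoint (hts_pair j i (fun hji => hij hji.symm))
  have dis2 : DCFC.Atr W s'⁻¹ ∩ W = ∅ := by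
    rw [hs'inv]; exact DCFC.Atr_mul_inv_disjoint (hus_pair l k (fun hlk => hkl hlk.symm))
  have dis3 : DCFC.Atr W s⁻¹ ∩ DCFC.Atr W s'⁻¹ = ∅ := by
    rw [hsinv, hs'inv]; exact hcross i j hij k l hkl
  have comA : d * h = h * d := DCFC.commute_of_disjoint hfaith dis1 hdR hhRW
  have comB : d * d' = d' * d := DCFC.commute_of_disjoint hfaith dis3 hdR hd'R
  have comC : d' * f = f * d' := DCFC.commute_of_disjoint hfaith dis2 hd'R hfRW
  set c : G := f * s * f⁻¹ * s⁻¹ with hc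
  set e : G := h * s' * h⁻¹ * s'⁻¹ with he
  have hcK : c ∈ K := by
    rw [hc]
    exact mul_mem hsK (inv_mem hsKm)
  have heK : e ∈ K := by
    rw [he]
    exact mul_mem hs'K (inv_mem hs'Km)
  have hcfd : c = f * d := by rw [hc, hd]; group
  have hehd : e = h * d' := by rw [he, hd']; group
  have hcRB : c ∈ rigidStabilizer G WB := by
    rw [hcfd]
    exact mul_mem (DCFC.rigid_mono hWWB hfRW)
      (DCFC.rigid_mono (DCFC.Atr_subset_of_le hWWB (inv_mem hsRB)) hdR)
  have heRB : e ∈ rigidStabilizer G WB := by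
    rw [hehd]
    exact mul_mem (DCFC.rigid_mono hWWB hhRW)
      (DCFC.rigid_mono (DCFC.Atr_subset_of_le hWWB (inv_mem hs'RB)) hd'R)
  have hid : c * e * c⁻¹ * e⁻¹ = f * h * f⁻¹ * h⁻¹ := by
    rw [hcfd, hehd]
    exact DCFC.comm_identity comA comB comC
  have hce : c * e * c⁻¹ * e⁻¹ ∈ N := hWB c e ⟨hcK, hcRB⟩ ⟨heK, heRB⟩
  rw [← hid]
  exact hce
end

section
/- Let G be a group acting faithfully on the right by homeomorphisms on a Hausdorff topological space X, and let N be a nontrivial normal subgroup of G. Then there exists a nonempty open subset U ⊆ X such that [R_G(U), R_G(U)] ≤ N. -/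
open MulOpposite

section Aux

variable {G X : Type*} [Group G] [MulAction Gᵐᵒᵖ X]

lemma aux_smul_mul (g h : G) (x : X) : op (g * h) • x = op h • (op g • x) := by
  rw [op_mul, mul_smul]

lemma aux_inv_smul_smul (g : G) (x : X) : op g⁻¹ • (op g • x) = x := by
  rw [op_inv]; exact inv_smul_smul _ _

lemma aux_faith_eq (hfaith : ∀ g : G, (∀ x : X, op g • x = x) → g = 1)
    {b c : G} (h : ∀ x : X, op b • x = op c • x) : b = c := by
  have h1 : b * c⁻¹ = 1 := by
    apply hfaith
    intro x
    rw [aux_smul_mul, h, aux_inv_smul_smul]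
  have := mul_inv_eq_one.mp h1
  exact this

/-- Elements with disjoint "supports" commute (given faithfulness). -/
lemma aux_commute (hfaith : ∀ g : G, (∀ x : X, op g • x = x) → g = 1)
    {b c : G} {U T : Set X}
    (hUT : ∀ y, y ∈ U → y ∉ T)
    (hb : ∀ y, y ∉ U → op b • y = y) (hb' : ∀ y ∈ U, op b • y ∈ U)
    (hc : ∀ y, y ∉ T → op c • y = y) (hc' : ∀ y ∈ T, op c • y ∈ T) :
    b * c = c * b := by
  apply aux_faith_eq hfaith
  intro y
  rw [aux_smul_mul, aux_smul_mul]
  by_cases hyU : y ∈ U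
  · have h1 : op b • y ∈ U := hb' y hyU
    rw [hc _ (hUT _ h1), hc _ (hUT _ hyU)]
  · rw [hb _ hyU]
    by_cases hyT : y ∈ T
    · have h1 : op c • y ∈ T := hc' y hyT
      rw [hb _ (fun h => hUT _ h h1)]
    · rw [hc _ hyT, hb _ hyU]

end Aux

/-- **Double commutator lemma for normal subgroups** (Nekrashevych; Lemma 1.1).
If a group `G` acts faithfully by homeomorphisms on a Hausdorff space `X`
(the right action is encoded as a left action of `Gᵐᵒᵖ`, so `x·g = op g • x`)
and `N` is a nontrivial normal subgroup of `G`, then there is a nonempty open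
`U ⊆ X` with `[R_G(U), R_G(U)] ≤ N`. -/
theorem double_commutator_normal
    {G X : Type*} [Group G] [TopologicalSpace X] [T2Space X] [MulAction Gᵐᵒᵖ X]
    (hcont : ∀ g : G, Continuous fun x : X => op g • x)
    (hfaith : ∀ g : G, (∀ x : X, op g • x = x) → g = 1)
    (N : Subgroup G) (hN : N.Normal) (hNbot : N ≠ ⊥) :
    ∃ U : Set X, IsOpen U ∧ U.Nonempty ∧
      ⁅rigidStabilizer G U, rigidStabilizer G U⁆ ≤ N := by
  -- pick a nontrivial element of N
  obtain ⟨⟨g, hgN⟩, hg1⟩ := Subgroup.ne_bot_iff_exists_ne_one.mp hNbot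
  have hg1' : g ≠ 1 := by
    intro h; apply hg1; ext; exact h
  have hginv : g⁻¹ ≠ 1 := inv_ne_one.mpr hg1'
  obtain ⟨x, hx⟩ : ∃ x : X, op g⁻¹ • x ≠ x := by
    by_contra h; push_neg at h
    exact hginv (hfaith g⁻¹ h)
  obtain ⟨W, V, hWopen, hVopen, hxW, hxV, hWV⟩ := t2_separation hx
  set U : Set X := V ∩ (fun y => op g⁻¹ • y) ⁻¹' W with hUdef
  have hUopen : IsOpen U := hVopen.inter ((hWopen.preimage (hcont g⁻¹)))
  have hxU : x ∈ U := ⟨hxV, hxW⟩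
  refine ⟨U, hUopen, ⟨x, hxU⟩, ?_⟩
  -- key moving property
  have hUmove : ∀ y ∈ U, op g⁻¹ • y ∉ U := by
    intro y hy hy2
    exact Set.disjoint_left.mp hWV hy.2 hy2.1
  -- membership in the rigid stabilizer
  have hmem : ∀ h : G, h ∈ rigidStabilizer G U → ∀ y, y ∉ U → op h • y = y := by
    intro h hh y hy
    exact hh y hy
  -- elements of R preserve U
  have hpres : ∀ h : G, h ∈ rigidStabilizer G U → ∀ y ∈ U, op h • y ∈ U := by
    intro h hh y hy
    by_contra hcon
    have h1 := hmem h⁻¹ (inv_mem hh) _ hcon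
    rw [aux_inv_smul_smul] at h1
    exact hcon (h1 ▸ hy)
  -- the support of a conjugate g * a * g⁻¹
  have hconj_smul : ∀ (a : G) (y : X),
      op (g * a * g⁻¹) • y = op g⁻¹ • (op a • (op g • y)) := by
    intro a y
    rw [aux_smul_mul, aux_smul_mul]
  set T : Set X := {y : X | op g • y ∈ U} with hTdef
  have hUT : ∀ y, y ∈ U → y ∉ T := by
    intro y hy hyT
    have h1 : op g⁻¹ • (op g • y) ∉ U := hUmove _ hyT
    rw [aux_inv_smul_smul] at h1
    exact h1 hy
  have hcfix : ∀ (a : G), a ∈ rigidStabilizer G U →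
      ∀ y, y ∉ T → op (g * a * g⁻¹) • y = y := by
    intro a ha y hy
    rw [hconj_smul, hmem a ha _ hy, aux_inv_smul_smul]
  have hcpres : ∀ (a : G), a ∈ rigidStabilizer G U →
      ∀ y ∈ T, op (g * a * g⁻¹) • y ∈ T := by
    intro a ha y hy
    have h1 : op a • (op g • y) ∈ U := hpres a ha _ hy
    show op g • (op (g * a * g⁻¹) • y) ∈ U
    rw [hconj_smul]
    have h2 : op g • (op g⁻¹ • (op a • (op g • y))) = op a • (op g • y) := by
      have := aux_inv_smul_smul (X := X) g⁻¹ (op a • (op g • y))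
      rwa [inv_inv] at this
    rw [h2]
    exact h1
  -- main commutator computation
  apply Subgroup.commutator_le.mpr
  intro a ha b hb
  -- first show ⁅a⁻¹, b⁆ ∈ N for all a b in R, then conclude
  have key : ∀ a ∈ rigidStabilizer G U, ∀ b ∈ rigidStabilizer G U,
      a⁻¹ * b * a * b⁻¹ ∈ N := by
    intro a ha b hb
    set c : G := g * a * g⁻¹ with hcdef
    set d : G := a⁻¹ * b * a with hddef
    have hdR : d ∈ rigidStabilizer G U :=
      mul_mem (mul_mem (inv_mem ha) hb) ha
    have hcd : c * d = d * c :=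
      aux_commute hfaith (b := c) (c := d) (U := T) (T := U)
        (fun y hy hy2 => hUT y hy2 hy)
        (hcfix a ha) (hcpres a ha) (hmem d hdR) (hpres d hdR)
    -- z = c * a⁻¹ ∈ N
    have hzN : c * a⁻¹ ∈ N := by
      have h1 : a * g⁻¹ * a⁻¹ ∈ N := hN.conj_mem g⁻¹ (inv_mem hgN) a
      have h2 : g * (a * g⁻¹ * a⁻¹) ∈ N := mul_mem hgN h1
      have h3 : g * (a * g⁻¹ * a⁻¹) = c * a⁻¹ := by
        rw [hcdef]; group
      rwa [h3] at h2
    set z : G := c * a⁻¹ with hzdef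
    have hcomm : z * b * z⁻¹ * b⁻¹ ∈ N := by
      have h := hN.conj_mem z⁻¹ (inv_mem hzN) b
      have h2 := mul_mem hzN h
      rwa [show z * (b * z⁻¹ * b⁻¹) = z * b * z⁻¹ * b⁻¹ by group] at h2
    have heq : z * b * z⁻¹ * b⁻¹ = a⁻¹ * b * a * b⁻¹ := by
      have h1 : z * b * z⁻¹ * b⁻¹ = c * d * c⁻¹ * b⁻¹ := by
        rw [hzdef, hddef]; group
      rw [h1, hcd, hddef]
      group
    rwa [heq] at hcomm
  have h1 := key a⁻¹ (inv_mem ha) b hb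
  rw [inv_inv] at h1
  show a * b * a⁻¹ * b⁻¹ ∈ N
  exact h1
end

section
/- Let Γ be a group acting faithfully on the right by bijections on a set X, let N be a normal subgroup of Γ, and suppose there exist γ ∈ N and a subset U ⊆ X with U ∩ (U·γ) = ∅. Then [R_Γ(U), R_Γ(U)] ≤ N. -/
open MulOpposite

lemma rigid_fix {G X : Type*} [Group G] [MulAction Gᵐᵒᵖ X] {U : Set X} {a : G}
    (ha : a ∈ rigidStabilizer G U) {x : X} (hx : x ∉ U) : op a • x = x := ha x hx

lemma rigid_maps {G X : Type*} [Group G] [MulAction Gᵐᵒᵖ X] {U : Set X} {a : G}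
    (ha : a ∈ rigidStabilizer G U) {x : X} (hx : x ∈ U) : op a • x ∈ U := by
  by_contra h
  have h1 := rigid_fix ((rigidStabilizer G U).inv_mem ha) h
  rw [op_inv, inv_smul_smul] at h1
  exact h (by rw [← h1]; exact hx)

lemma rigid_comm {G X : Type*} [Group G] [MulAction Gᵐᵒᵖ X] {U V : Set X} {a d : G}
    (ha : a ∈ rigidStabilizer G U) (hd : d ∈ rigidStabilizer G V)
    (hUV : U ∩ V = ∅) (x : X) : op (a * d) • x = op (d * a) • x := by
  have hdisj : ∀ y, y ∈ U → y ∉ V := fun y hy hv =>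
    Set.eq_empty_iff_forall_notMem.mp hUV y ⟨hy, hv⟩
  rw [op_mul, op_mul, mul_smul, mul_smul]
  by_cases hx : x ∈ U
  · rw [rigid_fix hd (hdisj x hx), rigid_fix hd (hdisj _ (rigid_maps ha hx))]
  · rw [rigid_fix ha hx]
    by_cases hx' : x ∈ V
    · rw [rigid_fix ha (fun h => hdisj _ h (rigid_maps hd hx'))]
    · rw [rigid_fix hd hx', rigid_fix ha hx]

/-- **Displacement version of the double commutator trick.**
If a group `Γ` acts faithfully on the right by bijections on a set `X`
(encoded as a left action of `Γᵐᵒᵖ`, so `x·g = op g • x`), `N` is a normal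
subgroup of `Γ`, and there are `γ ∈ N` and `U ⊆ X` with `U ∩ U·γ = ∅`,
then `[R_Γ(U), R_Γ(U)] ≤ N`. -/
theorem double_commutator_displaced
    {Γ X : Type*} [Group Γ] [MulAction Γᵐᵒᵖ X]
    (hfaith : ∀ g : Γ, (∀ x : X, op g • x = x) → g = 1)
    (N : Subgroup Γ) (hN : N.Normal)
    (γ : Γ) (hγ : γ ∈ N) (U : Set X)
    (hdisj : U ∩ ((fun x : X => op γ • x) '' U) = ∅) :
    ⁅rigidStabilizer Γ U, rigidStabilizer Γ U⁆ ≤ N := by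
  rw [Subgroup.commutator_le]
  intro a ha b hb
  set c : Γ := γ⁻¹ * b * γ with hc
  have hcR : c ∈ rigidStabilizer Γ ((fun x : X => op γ • x) '' U) := by
    intro x hx
    have hx' : op γ⁻¹ • x ∉ U := fun h => hx ⟨_, h, show op γ • (op γ⁻¹ • x) = x by rw [op_inv]; exact smul_inv_smul _ _⟩
    have : op c • x = op γ • (op b • (op γ⁻¹ • x)) := by
      rw [hc, op_mul, op_mul, mul_smul, mul_smul]
    rw [this, rigid_fix hb hx', op_inv, smul_inv_smul]
  have hcomm : a * c = c * a := by
    have hpt : ∀ x : X, op (a * c) • x = op (c * a) • x := rigid_comm ha hcR hdisj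
    have h1 : ∀ x : X, op ((a * c) * (c * a)⁻¹) • x = x := by
      intro x
      rw [op_mul, mul_smul, hpt, op_inv, inv_smul_smul]
    have := hfaith _ h1
    rwa [mul_inv_eq_one] at this
  have hm1 : b * c⁻¹ ∈ N := by
    have he : b * c⁻¹ = (b * γ⁻¹ * b⁻¹) * γ := by rw [hc]; group
    rw [he]
    exact N.mul_mem (hN.conj_mem γ⁻¹ (N.inv_mem hγ) b) hγ
  have hm2 : c * b⁻¹ ∈ N := by
    have he : c * b⁻¹ = γ⁻¹ * (b * γ * b⁻¹) := by rw [hc]; group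
    rw [he]
    exact N.mul_mem (N.inv_mem hγ) (hN.conj_mem γ hγ b)
  open scoped commutatorElement in
  have key : ⁅a, b⁆ = (a * (b * c⁻¹) * a⁻¹) * (c * b⁻¹) := by
    have h4 : a⁻¹ * c = c * a⁻¹ := (Commute.inv_left hcomm : Commute a⁻¹ c)
    have h3 : (a * (b * c⁻¹) * a⁻¹) * (c * b⁻¹) = a * b * (c⁻¹ * (a⁻¹ * c)) * b⁻¹ := by
      group
    rw [commutatorElement_def, h3, h4]
    group
  rw [key]
  exact N.mul_mem (hN.conj_mem _ hm1 a) hm2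
end

section
/- Let G be a countable group acting faithfully on the right by homeomorphisms on a second countable Hausdorff topological space X, let U ⊆ X be an open subset with complement U^c = X \ U, and let H ≤ G be a subgroup. Let L = {h ∈ H : U·h = U}; every element of L preserves both U and U^c, so restriction gives group homomorphisms ρ_U : L → Sym(U) and ρ_{U^c} : L → Sym(U^c) into the groups of bijections of U and of U^c. Then ρ_{U^c}(R_H(U^c)) is a normal subgroup of ρ_{U^c}(L), ρ_U(R_H(U)) is a normal subgroup of ρ_U(L), and there is a group isomorphism ρ_{U^c}(L)/ρ_{U^c}(R_H(U^c)) ≅ ρ_U(L)/ρ_U(R_H(U)). -/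
open MulOpposite

/-- Setwise stabilizer `{g ∈ G : U·g = U}`. -/
def setStabilizer (G : Type*) {X : Type*} [Group G] [MulAction Gᵐᵒᵖ X] (U : Set X) :
    Subgroup G where
  carrier := {g : G | (fun x : X => op g • x) '' U = U}
  one_mem' := by
    show (fun x : X => op (1 : G) • x) '' U = U
    simp
  mul_mem' := by
    intro g h hg hh
    show (fun x : X => op (g * h) • x) '' U = U
    have h1 : (fun x : X => op (g * h) • x)
        = (fun x : X => op h • x) ∘ (fun x : X => op g • x) := by
      funext x
      simp [op_mul, mul_smul]
    rw [h1, Set.image_comp, hg, hh]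
  inv_mem' := by
    intro g hg
    show (fun x : X => op g⁻¹ • x) '' U = U
    have h2 : (fun x : X => op g⁻¹ • x) '' ((fun x : X => op g • x) '' U) = U := by
      rw [← Set.image_comp]
      have h3 : ((fun x : X => op g⁻¹ • x) ∘ (fun x : X => op g • x)) = id := by
        funext x
        simp [op_inv]
      rw [h3, Set.image_id]
    rw [hg] at h2
    exact h2

/-- The set of permutations of `U` arising as restrictions to `U` of elements of the
subgroup `S ≤ G` which map `U` onto itself; it is a subgroup of `Sym(U)`. -/
def restrictedImage {G X : Type*} [Group G] [MulAction Gᵐᵒᵖ X] (U : Set X)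
    (S : Subgroup G) : Subgroup (Equiv.Perm ↥U) where
  carrier := {σ : Equiv.Perm ↥U | ∃ h ∈ S, (fun x : X => op h • x) '' U = U ∧
    ∀ x : ↥U, (σ x : X) = op h • (x : X)}
  one_mem' := ⟨1, S.one_mem, by simp, by intro x; simp⟩
  mul_mem' := by
    rintro σ τ ⟨a, haS, haU, ha⟩ ⟨b, hbS, hbU, hb⟩
    refine ⟨b * a, S.mul_mem hbS haS, ?_, ?_⟩
    · have h1 : (fun x : X => op (b * a) • x)
          = (fun x : X => op a • x) ∘ (fun x : X => op b • x) := by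
        funext x; simp [op_mul, mul_smul]
      rw [h1, Set.image_comp, hbU, haU]
    · intro x
      have h2 : (σ * τ) x = σ (τ x) := rfl
      rw [h2, ha (τ x), hb x]
      simp [op_mul, mul_smul]
  inv_mem' := by
    rintro σ ⟨a, haS, haU, ha⟩
    refine ⟨a⁻¹, S.inv_mem haS, ?_, ?_⟩
    · have h2 : (fun x : X => op a⁻¹ • x) '' ((fun x : X => op a • x) '' U) = U := by
        rw [← Set.image_comp]
        have h3 : ((fun x : X => op a⁻¹ • x) ∘ (fun x : X => op a • x)) = id := by
          funext x; simp [op_inv]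
        rw [h3, Set.image_id]
      rw [haU] at h2; exact h2
    · intro x
      have h4 : (σ (σ⁻¹ x) : X) = op a • ((σ⁻¹ x : ↥U) : X) := ha (σ⁻¹ x)
      have h5 : σ (σ⁻¹ x) = x := Equiv.apply_symm_apply σ x
      rw [h5] at h4
      show ((σ⁻¹ x : ↥U) : X) = op a⁻¹ • (x : X)
      rw [h4, op_inv, inv_smul_smul]
section Aux

variable {G X : Type*} [Group G] [MulAction Gᵐᵒᵖ X]

lemma smul_mem_of_image_eq {h : G} {V : Set X} (hm : (fun x : X => op h • x) '' V = V)
    {x : X} (hx : x ∈ V) : op h • x ∈ V := by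
  have : op h • x ∈ (fun x : X => op h • x) '' V := ⟨x, hx, rfl⟩
  rwa [hm] at this

lemma inv_smul_mem_of_image_eq {h : G} {V : Set X} (hm : (fun x : X => op h • x) '' V = V)
    {x : X} (hx : x ∈ V) : op h⁻¹ • x ∈ V := by
  rw [← hm] at hx
  obtain ⟨y, hy, rfl⟩ := hx
  simpa [op_inv] using hy

lemma image_compl_eq {h : G} {V : Set X} (hm : (fun x : X => op h • x) '' V = V) :
    (fun x : X => op h • x) '' Vᶜ = Vᶜ := by
  ext y
  constructor
  · rintro ⟨x, hx, rfl⟩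
    intro hyV
    exact hx (by simpa using inv_smul_mem_of_image_eq hm hyV)
  · intro hy
    refine ⟨op h⁻¹ • y, fun hmem => hy ?_, by simp [op_inv]⟩
    simpa [op_inv] using smul_mem_of_image_eq hm hmem

lemma image_eq_of_fix {h : G} {V : Set X} (hfix : ∀ x ∈ Vᶜ, op h • x = x) :
    (fun x : X => op h • x) '' V = V := by
  have hc : (fun x : X => op h • x) '' Vᶜ = Vᶜ := by
    ext y
    constructor
    · rintro ⟨x, hx, rfl⟩; show op h • x ∈ Vᶜ; rwa [hfix x hx]
    · intro hy; exact ⟨y, hy, hfix y hy⟩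
  have := image_compl_eq (V := Vᶜ) hc
  simpa using this

/-- The permutation of `V` induced by right multiplication by `h`. -/
def permOf (V : Set X) (h : G) (hm : (fun x : X => op h • x) '' V = V) :
    Equiv.Perm ↥V where
  toFun x := ⟨op h • (x : X), smul_mem_of_image_eq hm x.2⟩
  invFun x := ⟨op h⁻¹ • (x : X), inv_smul_mem_of_image_eq hm x.2⟩
  left_inv x := by ext; simp [op_inv]
  right_inv x := by ext; simp [op_inv]

@[simp] lemma permOf_coe {V : Set X} {h : G} {hm : (fun x : X => op h • x) '' V = V}
    (x : ↥V) : (permOf V h hm x : X) = op h • (x : X) := rfl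

lemma mem_restrictedImage_iff {V : Set X} {S : Subgroup G} {σ : Equiv.Perm ↥V} :
    σ ∈ restrictedImage V S ↔ ∃ h ∈ S, (fun x : X => op h • x) '' V = V ∧
      ∀ x : ↥V, (σ x : X) = op h • (x : X) := Iff.rfl

lemma permOf_mem {V : Set X} {S : Subgroup G} {h : G} (hS : h ∈ S)
    (hm : (fun x : X => op h • x) '' V = V) : permOf V h hm ∈ restrictedImage V S :=
  ⟨h, hS, hm, fun _ => rfl⟩

lemma eq_permOf {V : Set X} {σ : Equiv.Perm ↥V} {h : G}
    (hm : (fun x : X => op h • x) '' V = V)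
    (hw : ∀ x : ↥V, (σ x : X) = op h • (x : X)) : σ = permOf V h hm := by
  ext x
  exact congrArg _ (Subtype.ext (hw x))

lemma permOf_mul {V : Set X} {h₁ h₂ : G} {hm₁ : (fun x : X => op h₁ • x) '' V = V}
    {hm₂ : (fun x : X => op h₂ • x) '' V = V}
    (hm : (fun x : X => op (h₂ * h₁) • x) '' V = V) :
    permOf V h₁ hm₁ * permOf V h₂ hm₂ = permOf V (h₂ * h₁) hm := by
  ext x
  show (permOf V h₁ hm₁ (permOf V h₂ hm₂ x) : X) = _
  simp [op_mul, mul_smul]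

lemma image_mul {h₁ h₂ : G} {V : Set X} (hm₁ : (fun x : X => op h₁ • x) '' V = V)
    (hm₂ : (fun x : X => op h₂ • x) '' V = V) :
    (fun x : X => op (h₁ * h₂) • x) '' V = V := by
  have : (fun x : X => op (h₁ * h₂) • x)
      = (fun x : X => op h₂ • x) ∘ (fun x : X => op h₁ • x) := by
    funext x; simp [op_mul, mul_smul]
  rw [this, Set.image_comp, hm₁, hm₂]

lemma image_inv {h : G} {V : Set X} (hm : (fun x : X => op h • x) '' V = V) :
    (fun x : X => op h⁻¹ • x) '' V = V := by
  ext y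
  constructor
  · rintro ⟨x, hx, rfl⟩; exact inv_smul_mem_of_image_eq hm hx
  · intro hy; exact ⟨op h • y, smul_mem_of_image_eq hm hy, by simp [op_inv]⟩

lemma permOf_inv {V : Set X} {h : G} {hm : (fun x : X => op h • x) '' V = V}
    (hm' : (fun x : X => op h⁻¹ • x) '' V = V) :
    (permOf V h hm)⁻¹ = permOf V h⁻¹ hm' := by
  rw [eq_comm, eq_inv_iff_mul_eq_one]
  rw [permOf_mul (by simpa using (Set.image_id V))]
  ext x
  simp

end Aux
section Aux2

variable {G X : Type*} [Group G] [MulAction Gᵐᵒᵖ X]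

lemma image_eq_of_fix' {h : G} {V : Set X} (hfix : ∀ x ∈ V, op h • x = x) :
    (fun x : X => op h • x) '' V = V := by
  ext y
  constructor
  · rintro ⟨x, hx, rfl⟩; show op h • x ∈ V; rwa [hfix x hx]
  · intro hy; exact ⟨y, hy, hfix y hy⟩

lemma mem_setStabilizer_iff {h : G} {U : Set X} :
    h ∈ setStabilizer G U ↔ (fun x : X => op h • x) '' U = U := Iff.rfl

lemma mem_pointwiseStabilizer_iff {h : G} {A : Set X} :
    h ∈ pointwiseStabilizer G A ↔ ∀ x ∈ A, op h • x = x := Iff.rfl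

lemma mem_rigidStabilizer_iff {h : G} {U : Set X} :
    h ∈ rigidStabilizer G U ↔ ∀ x ∈ Uᶜ, op h • x = x := Iff.rfl

lemma restrictedImage_le_and_normal (W : Set X) (S A : Subgroup G)
    (hAS : A ≤ S)
    (hSW : ∀ h ∈ S, (fun x : X => op h • x) '' W = W)
    (hAfix : ∀ a ∈ A, ∀ x ∈ Wᶜ, op a • x = x)
    (hAconj : ∀ b ∈ S, ∀ a ∈ A, b⁻¹ * a * b ∈ A) :
    restrictedImage W A ≤ restrictedImage W S ∧
      ((restrictedImage W A).subgroupOf (restrictedImage W S)).Normal := by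
  constructor
  · rintro σ ⟨a, haA, him, hw⟩
    exact ⟨a, hAS haA, him, hw⟩
  · constructor
    intro n hn g
    rw [Subgroup.mem_subgroupOf] at hn ⊢
    obtain ⟨a, haA, hima, hwa⟩ := hn
    obtain ⟨b, hbS, himb, hwb⟩ := g.2
    have hc : b⁻¹ * a * b ∈ A := hAconj b hbS a haA
    have hcfix : ∀ x ∈ Wᶜ, op (b⁻¹ * a * b) • x = x := hAfix _ hc
    refine ⟨b⁻¹ * a * b, hc, image_eq_of_fix hcfix, ?_⟩
    intro x
    have hginv : ∀ y : ↥W, (((g : Equiv.Perm ↥W))⁻¹ y : X) = op b⁻¹ • (y : X) := by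
      intro y
      have h1 : ((g : Equiv.Perm ↥W) ((g : Equiv.Perm ↥W)⁻¹ y) : X)
          = op b • (((g : Equiv.Perm ↥W)⁻¹ y : ↥W) : X) := hwb _
      rw [show (g : Equiv.Perm ↥W) ((g : Equiv.Perm ↥W)⁻¹ y) = y from Equiv.apply_symm_apply _ y] at h1
      rw [op_inv, eq_comm, inv_smul_eq_iff, ← h1]
    have e1 : (((g : Equiv.Perm ↥W) * (n : Equiv.Perm ↥W) * (g : Equiv.Perm ↥W)⁻¹) x : X)
        = op b • (op a • (op b⁻¹ • (x : X))) := by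
      rw [Equiv.Perm.mul_apply, Equiv.Perm.mul_apply, hwb, hwa, hginv]
    show (((g * n * g⁻¹ : ↥(restrictedImage W S)) : Equiv.Perm ↥W) x : X) = _
    rw [Subgroup.coe_mul, Subgroup.coe_mul, Subgroup.coe_inv, e1]
    simp [op_mul, op_inv, mul_smul]

noncomputable def resQuotMap (V W : Set X) (S B : Subgroup G)
    (hSV : ∀ h ∈ S, (fun x : X => op h • x) '' V = V) :
    ↥(restrictedImage W S) →
      ↥(restrictedImage V S) ⧸ (restrictedImage V B).subgroupOf (restrictedImage V S) :=
  fun σ =>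
    QuotientGroup.mk ⟨permOf V (mem_restrictedImage_iff.mp σ.2).choose
        (hSV _ (mem_restrictedImage_iff.mp σ.2).choose_spec.1),
      permOf_mem (mem_restrictedImage_iff.mp σ.2).choose_spec.1 _⟩

lemma mk_permOf_congr (V W : Set X) (S B : Subgroup G)
    (hSV : ∀ h ∈ S, (fun x : X => op h • x) '' V = V)
    (hB : ∀ g ∈ S, (∀ x ∈ W, op g • x = x) → g ∈ B)
    {h h' : G} (hhS : h ∈ S) (hh'S : h' ∈ S)
    (hagree : ∀ x ∈ W, op h • x = op h' • x) :
    (QuotientGroup.mk ⟨permOf V h (hSV h hhS), permOf_mem hhS (hSV h hhS)⟩ :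
        ↥(restrictedImage V S) ⧸ (restrictedImage V B).subgroupOf (restrictedImage V S))
      = QuotientGroup.mk ⟨permOf V h' (hSV h' hh'S), permOf_mem hh'S (hSV h' hh'S)⟩ := by
  rw [QuotientGroup.eq, Subgroup.mem_subgroupOf]
  have hfix : ∀ x ∈ W, op (h' * h⁻¹) • x = x := by
    intro x hx
    calc op (h' * h⁻¹) • x = op h⁻¹ • (op h' • x) := by rw [op_mul, mul_smul]
    _ = x := by rw [← hagree x hx, op_inv, inv_smul_smul]
  refine ⟨h' * h⁻¹, hB _ (S.mul_mem hh'S (S.inv_mem hhS)) hfix,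
    image_mul (hSV h' hh'S) (image_inv (hSV h hhS)), ?_⟩
  intro x
  simp only [Subgroup.coe_mul, InvMemClass.coe_inv, Equiv.Perm.mul_apply]
  rw [permOf_inv (image_inv (hSV h hhS))]
  simp [op_mul, op_inv, mul_smul]

lemma resQuotMap_eq (V W : Set X) (S B : Subgroup G)
    (hSV : ∀ h ∈ S, (fun x : X => op h • x) '' V = V)
    (hB : ∀ g ∈ S, (∀ x ∈ W, op g • x = x) → g ∈ B)
    (σ : ↥(restrictedImage W S)) {h : G} (hhS : h ∈ S)
    (hw : ∀ x : ↥W, ((σ : Equiv.Perm ↥W) x : X) = op h • (x : X)) :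
    resQuotMap V W S B hSV σ =
      QuotientGroup.mk ⟨permOf V h (hSV h hhS), permOf_mem hhS (hSV h hhS)⟩ := by
  unfold resQuotMap
  obtain ⟨hh₀S, him₀, hw₀⟩ := (mem_restrictedImage_iff.mp σ.2).choose_spec
  exact mk_permOf_congr V W S B hSV hB hh₀S hhS
    (fun x hx => ((hw₀ ⟨x, hx⟩).symm.trans (hw ⟨x, hx⟩)))

lemma resQuotMap_mul (V W : Set X) (S B : Subgroup G)
    (hSV : ∀ h ∈ S, (fun x : X => op h • x) '' V = V)
    (hB : ∀ g ∈ S, (∀ x ∈ W, op g • x = x) → g ∈ B)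
    [((restrictedImage V B).subgroupOf (restrictedImage V S)).Normal]
    (σ τ : ↥(restrictedImage W S)) :
    resQuotMap V W S B hSV (σ * τ)
      = resQuotMap V W S B hSV σ * resQuotMap V W S B hSV τ := by
  obtain ⟨a, haS, hima, hwa⟩ := σ.2
  obtain ⟨b, hbS, himb, hwb⟩ := τ.2
  have hwst : ∀ x : ↥W, (((σ * τ : ↥(restrictedImage W S)) : Equiv.Perm ↥W) x : X)
      = op (b * a) • (x : X) := by
    intro x
    rw [Subgroup.coe_mul, Equiv.Perm.mul_apply, hwa, hwb]
    simp [op_mul, mul_smul]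
  rw [resQuotMap_eq V W S B hSV hB σ haS hwa,
    resQuotMap_eq V W S B hSV hB τ hbS hwb,
    resQuotMap_eq V W S B hSV hB (σ * τ) (S.mul_mem hbS haS) hwst]
  rw [← QuotientGroup.mk_mul]
  refine congrArg _ (Subtype.ext ?_)
  rw [Subgroup.coe_mul]
  exact (permOf_mul (hm₁ := hSV a haS) (hm₂ := hSV b hbS)
    (hSV _ (S.mul_mem hbS haS))).symm

end Aux2
section Aux3

variable {G X : Type*} [Group G] [MulAction Gᵐᵒᵖ X]

lemma quotient_iso_general (V W : Set X) (S A B : Subgroup G)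
    (hSV : ∀ h ∈ S, (fun x : X => op h • x) '' V = V)
    (hSW : ∀ h ∈ S, (fun x : X => op h • x) '' W = W)
    (hAS : A ≤ S) (hBS : B ≤ S)
    (hAfix : ∀ a ∈ A, ∀ x ∈ V, op a • x = x)
    (hBfix : ∀ b ∈ B, ∀ x ∈ W, op b • x = x)
    (hA : ∀ g ∈ S, (∀ x ∈ V, op g • x = x) → g ∈ A)
    (hB : ∀ g ∈ S, (∀ x ∈ W, op g • x = x) → g ∈ B)
    [h₁ : ((restrictedImage W A).subgroupOf (restrictedImage W S)).Normal]
    [h₂ : ((restrictedImage V B).subgroupOf (restrictedImage V S)).Normal] :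
    Nonempty
      ((↥(restrictedImage W S) ⧸ (restrictedImage W A).subgroupOf (restrictedImage W S)) ≃*
       (↥(restrictedImage V S) ⧸ (restrictedImage V B).subgroupOf (restrictedImage V S))) := by
  classical
  set NW := (restrictedImage W A).subgroupOf (restrictedImage W S) with hNW
  set NV := (restrictedImage V B).subgroupOf (restrictedImage V S) with hNV
  let F : ↥(restrictedImage W S) →* (↥(restrictedImage V S) ⧸ NV) :=
    MonoidHom.mk' (resQuotMap V W S B hSV) (resQuotMap_mul V W S B hSV hB)
  let F' : ↥(restrictedImage V S) →* (↥(restrictedImage W S) ⧸ NW) :=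
    MonoidHom.mk' (resQuotMap W V S A hSW) (resQuotMap_mul W V S A hSW hA)
  have hkerF : ∀ σ ∈ NW, F σ = 1 := by
    intro σ hσ
    rw [hNW, Subgroup.mem_subgroupOf] at hσ
    obtain ⟨a, haA, hima, hwa⟩ := hσ
    have h1 : F σ = QuotientGroup.mk ⟨permOf V a (hSV a (hAS haA)),
        permOf_mem (hAS haA) (hSV a (hAS haA))⟩ :=
      resQuotMap_eq V W S B hSV hB σ (hAS haA) hwa
    rw [h1, ← QuotientGroup.mk_one]
    refine congrArg _ (Subtype.ext ?_)
    show permOf V a (hSV a (hAS haA)) = 1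
    ext x
    show (permOf V a (hSV a (hAS haA)) x : X) = (x : X)
    rw [permOf_coe]
    exact hAfix a haA x x.2
  have hkerF' : ∀ σ ∈ NV, F' σ = 1 := by
    intro σ hσ
    rw [hNV, Subgroup.mem_subgroupOf] at hσ
    obtain ⟨b, hbB, himb, hwb⟩ := hσ
    have h1 : F' σ = QuotientGroup.mk ⟨permOf W b (hSW b (hBS hbB)),
        permOf_mem (hBS hbB) (hSW b (hBS hbB))⟩ :=
      resQuotMap_eq W V S A hSW hA σ (hBS hbB) hwb
    rw [h1, ← QuotientGroup.mk_one]
    refine congrArg _ (Subtype.ext ?_)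
    show permOf W b (hSW b (hBS hbB)) = 1
    ext x
    show (permOf W b (hSW b (hBS hbB)) x : X) = (x : X)
    rw [permOf_coe]
    exact hBfix b hbB x x.2
  let Φ : (↥(restrictedImage W S) ⧸ NW) →* (↥(restrictedImage V S) ⧸ NV) :=
    QuotientGroup.lift NW F hkerF
  let Ψ : (↥(restrictedImage V S) ⧸ NV) →* (↥(restrictedImage W S) ⧸ NW) :=
    QuotientGroup.lift NV F' hkerF'
  have hΨΦ : Function.LeftInverse Ψ Φ := by
    intro q
    induction q using QuotientGroup.induction_on with
    | H σ =>
      obtain ⟨a, haS, hima, hwa⟩ := σ.2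
      have h1 : Φ (QuotientGroup.mk σ) = QuotientGroup.mk ⟨permOf V a (hSV a haS),
          permOf_mem haS (hSV a haS)⟩ := by
        show F σ = _
        exact resQuotMap_eq V W S B hSV hB σ haS hwa
      have h2 : Ψ (QuotientGroup.mk (⟨permOf V a (hSV a haS),
          permOf_mem haS (hSV a haS)⟩ : ↥(restrictedImage V S)))
          = QuotientGroup.mk ⟨permOf W a (hSW a haS), permOf_mem haS (hSW a haS)⟩ := by
        show F' _ = _
        exact resQuotMap_eq W V S A hSW hA _ haS (fun x => rfl)
      rw [h1, h2]
      refine congrArg _ (Subtype.ext ?_)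
      exact (eq_permOf (hSW a haS) hwa).symm
  have hΦΨ : Function.RightInverse Ψ Φ := by
    intro q
    induction q using QuotientGroup.induction_on with
    | H σ =>
      obtain ⟨a, haS, hima, hwa⟩ := σ.2
      have h1 : Ψ (QuotientGroup.mk σ) = QuotientGroup.mk ⟨permOf W a (hSW a haS),
          permOf_mem haS (hSW a haS)⟩ := by
        show F' σ = _
        exact resQuotMap_eq W V S A hSW hA σ haS hwa
      have h2 : Φ (QuotientGroup.mk (⟨permOf W a (hSW a haS),
          permOf_mem haS (hSW a haS)⟩ : ↥(restrictedImage W S)))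
          = QuotientGroup.mk ⟨permOf V a (hSV a haS), permOf_mem haS (hSV a haS)⟩ := by
        show F _ = _
        exact resQuotMap_eq V W S B hSV hB _ haS (fun x => rfl)
      rw [h1, h2]
      refine congrArg _ (Subtype.ext ?_)
      exact (eq_permOf (hSV a haS) hwa).symm
  exact ⟨MulEquiv.mk ⟨Φ, Ψ, hΨΦ, hΦΨ⟩ (map_mul Φ)⟩

end Aux3

/-- **Fact 3.2.** Let `G` be a countable group acting faithfully by homeomorphisms on a
second countable Hausdorff space `X` (the right action is encoded as a left action of
`Gᵐᵒᵖ`, so `x·g = op g • x`), `U ⊆ X` open, `H ≤ G`, and `L = {h ∈ H : U·h = U}`.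
Then the restriction `ρ_{Uᶜ}(R_H(Uᶜ))` is normal in `ρ_{Uᶜ}(L)`, the restriction
`ρ_U(R_H(U))` is normal in `ρ_U(L)`, and the corresponding quotients are isomorphic;
here `ρ_U(S)` is formalized as `restrictedImage U (H ⊓ S)`, the group of restrictions
to `U` of the elements of `H ⊓ S` mapping `U` onto itself. -/
theorem restriction_quotient_iso
    {G X : Type*} [Group G] [Countable G] [TopologicalSpace X]
    [SecondCountableTopology X] [T2Space X] [MulAction Gᵐᵒᵖ X]
    (hcont : ∀ g : G, Continuous fun x : X => op g • x)
    (hfaith : ∀ g : G, (∀ x : X, op g • x = x) → g = 1)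
    (U : Set X) (hU : IsOpen U) (H : Subgroup G) :
    restrictedImage Uᶜ (H ⊓ rigidStabilizer G Uᶜ)
        ≤ restrictedImage Uᶜ (H ⊓ setStabilizer G U) ∧
    ((restrictedImage Uᶜ (H ⊓ rigidStabilizer G Uᶜ)).subgroupOf
        (restrictedImage Uᶜ (H ⊓ setStabilizer G U))).Normal ∧
    restrictedImage U (H ⊓ rigidStabilizer G U)
        ≤ restrictedImage U (H ⊓ setStabilizer G U) ∧
    ((restrictedImage U (H ⊓ rigidStabilizer G U)).subgroupOf
        (restrictedImage U (H ⊓ setStabilizer G U))).Normal ∧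
    ∀ [_h₁ : ((restrictedImage Uᶜ (H ⊓ rigidStabilizer G Uᶜ)).subgroupOf
        (restrictedImage Uᶜ (H ⊓ setStabilizer G U))).Normal]
      [_h₂ : ((restrictedImage U (H ⊓ rigidStabilizer G U)).subgroupOf
        (restrictedImage U (H ⊓ setStabilizer G U))).Normal],
      Nonempty
        ((↥(restrictedImage Uᶜ (H ⊓ setStabilizer G U)) ⧸
            (restrictedImage Uᶜ (H ⊓ rigidStabilizer G Uᶜ)).subgroupOf
              (restrictedImage Uᶜ (H ⊓ setStabilizer G U))) ≃*
         (↥(restrictedImage U (H ⊓ setStabilizer G U)) ⧸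
            (restrictedImage U (H ⊓ rigidStabilizer G U)).subgroupOf
              (restrictedImage U (H ⊓ setStabilizer G U)))) := by  classical
  set S := H ⊓ setStabilizer G U with hSdef
  set A := H ⊓ rigidStabilizer G Uᶜ with hAdef
  set B := H ⊓ rigidStabilizer G U with hBdef
  have hSU : ∀ h ∈ S, (fun x : X => op h • x) '' U = U := by
    intro h hh
    exact mem_setStabilizer_iff.mp (Subgroup.mem_inf.mp hh).2
  have hSW : ∀ h ∈ S, (fun x : X => op h • x) '' Uᶜ = Uᶜ := by
    intro h hh
    exact image_compl_eq (hSU h hh)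
  have hAfixU : ∀ a ∈ A, ∀ x ∈ U, op a • x = x := by
    intro a ha x hx
    have := (Subgroup.mem_inf.mp ha).2
    rw [mem_rigidStabilizer_iff] at this
    exact this x (by simpa using hx)
  have hBfixW : ∀ b ∈ B, ∀ x ∈ Uᶜ, op b • x = x := by
    intro b hb x hx
    exact (mem_rigidStabilizer_iff.mp (Subgroup.mem_inf.mp hb).2) x hx
  have hAS : A ≤ S := by
    intro a ha
    exact Subgroup.mem_inf.mpr ⟨(Subgroup.mem_inf.mp ha).1,
      mem_setStabilizer_iff.mpr (image_eq_of_fix' (hAfixU a ha))⟩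
  have hBS : B ≤ S := by
    intro b hb
    exact Subgroup.mem_inf.mpr ⟨(Subgroup.mem_inf.mp hb).1,
      mem_setStabilizer_iff.mpr (image_eq_of_fix (hBfixW b hb))⟩
  have hA : ∀ g ∈ S, (∀ x ∈ U, op g • x = x) → g ∈ A := by
    intro g hg hfix
    refine Subgroup.mem_inf.mpr ⟨(Subgroup.mem_inf.mp hg).1, ?_⟩
    rw [mem_rigidStabilizer_iff]
    intro x hx
    exact hfix x (by simpa using hx)
  have hB : ∀ g ∈ S, (∀ x ∈ Uᶜ, op g • x = x) → g ∈ B := by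
    intro g hg hfix
    exact Subgroup.mem_inf.mpr ⟨(Subgroup.mem_inf.mp hg).1,
      mem_rigidStabilizer_iff.mpr hfix⟩
  have hconj : ∀ (b a : G) (x : X), op (b⁻¹ * a * b) • x = op b • (op a • (op b⁻¹ • x)) := by
    intro b a x
    simp [op_mul, op_inv, mul_smul]
  have hAconj : ∀ b ∈ S, ∀ a ∈ A, b⁻¹ * a * b ∈ A := by
    intro b hb a ha
    refine hA _ (S.mul_mem (S.mul_mem (S.inv_mem hb) (hAS ha)) hb) ?_
    intro x hx
    rw [hconj, hAfixU a ha _ (inv_smul_mem_of_image_eq (hSU b hb) hx), op_inv, smul_inv_smul]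
  have hBconj : ∀ b ∈ S, ∀ a ∈ B, b⁻¹ * a * b ∈ B := by
    intro b hb a ha
    refine hB _ (S.mul_mem (S.mul_mem (S.inv_mem hb) (hBS ha)) hb) ?_
    intro x hx
    rw [hconj, hBfixW a ha _ (inv_smul_mem_of_image_eq (hSW b hb) hx), op_inv, smul_inv_smul]
  have part12 := restrictedImage_le_and_normal Uᶜ S A hAS hSW
    (by intro a ha x hx; exact hAfixU a ha x (by simpa using hx)) hAconj
  have part34 := restrictedImage_le_and_normal U S B hBS hSU hBfixW hBconj
  refine ⟨part12.1, part12.2, part34.1, part34.2, ?_⟩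
  intro _h₁ _h₂
  exact quotient_iso_general U Uᶜ S A B hSU hSW hAS hBS hAfixU hBfixW hA hB
    (h₁ := _h₁) (h₂ := _h₂)
end

section
/- Let G be a group acting on the right by homeomorphisms on a Hausdorff topological space X. Suppose that for every nonempty open V ⊆ X the rigid stabilizer R_G(V) has no fixed point in V, i.e. for every x ∈ V there is g ∈ R_G(V) with x·g ≠ x. Then for every nonempty open V ⊆ X and every x ∈ V, the orbit {x·g : g ∈ R_G(V)} is infinite. -/
open MulOpposite

/-- If a group `G` acts on the right by homeomorphisms on a Hausdorff space `X`
(encoded as a left action of `Gᵐᵒᵖ`, so `x·g = op g • x`) and for every nonempty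
open `V ⊆ X` the rigid stabilizer `R_G(V)` has no fixed point in `V`, then for every
nonempty open `V` and every `x ∈ V` the orbit `{x·g : g ∈ R_G(V)}` is infinite. -/
theorem rigidStabilizer_orbit_infinite
    {G X : Type*} [Group G] [TopologicalSpace X] [T2Space X] [MulAction Gᵐᵒᵖ X]
    (hcont : ∀ g : G, Continuous fun x : X => op g • x)
    (hnofix : ∀ V : Set X, IsOpen V → ∀ x ∈ V, ∃ g ∈ rigidStabilizer G V, op g • x ≠ x) :
    ∀ V : Set X, IsOpen V → ∀ x ∈ V,
      {y : X | ∃ g ∈ rigidStabilizer G V, y = op g • x}.Infinite := by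
  have mem_rigid : ∀ (U : Set X) (g : G),
      g ∈ rigidStabilizer G U ↔ ∀ y ∈ Uᶜ, op g • y = y := fun _ _ => Iff.rfl
  -- key: elements of the rigid stabilizer of U map U into U
  have key : ∀ (U : Set X) (g : G), g ∈ rigidStabilizer G U → ∀ x ∈ U, op g • x ∈ U := by
    intro U g hg x hx
    by_contra h
    have hginv : g⁻¹ ∈ rigidStabilizer G U := (rigidStabilizer G U).inv_mem hg
    have h2 : op g⁻¹ • (op g • x) = op g • x := (mem_rigid U g⁻¹).mp hginv _ h
    rw [op_inv, inv_smul_smul] at h2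
    rw [← h2] at h
    exact h hx
  intro V hV x hx
  by_contra hfin
  rw [Set.not_infinite] at hfin
  set O := {y : X | ∃ g ∈ rigidStabilizer G V, y = op g • x} with hO
  have hxO : x ∈ O := ⟨1, (rigidStabilizer G V).one_mem, by simp⟩
  have hFfin : (O \ {x}).Finite := hfin.subset Set.diff_subset
  have hFclosed : IsClosed (O \ {x}) := hFfin.isClosed
  set W := V ∩ (O \ {x})ᶜ with hW
  have hWopen : IsOpen W := hV.inter hFclosed.isOpen_compl
  have hxW : x ∈ W := ⟨hx, by simp⟩
  obtain ⟨g, hgW, hgx⟩ := hnofix W hWopen x hxW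
  have hgV : g ∈ rigidStabilizer G V := by
    rw [mem_rigid]
    intro y hy
    exact (mem_rigid W g).mp hgW y (fun hyW => hy hyW.1)
  have h1 : op g • x ∈ W := key W g hgW x hxW
  have h2 : op g • x ∈ O := ⟨g, hgV, rfl⟩
  exact h1.2 ⟨h2, hgx⟩
end

section
/- Let G be a group acting faithfully on the right by homeomorphisms on a Hausdorff topological space X, and let U ⊆ X be an open set with R_G(U) ≠ {1}. If x ∈ U is a point such that the orbit {x·g : g ∈ G, U·g = U} is dense in U, then x is not a fixed point of R_G(U): there exists h ∈ R_G(U) with x·h ≠ x. -/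
open MulOpposite

/-- (Remark 3.5.) If a group `G` acts faithfully by homeomorphisms on a Hausdorff space
`X` (encoded as a left action of `Gᵐᵒᵖ`, so `x·g = op g • x`), `U` is open with
`R_G(U) ≠ {1}`, and `x ∈ U` has dense orbit in `U` under the setwise stabilizer
`{g : U·g = U}`, then `x` is not fixed by `R_G(U)`. -/
theorem not_fixed_of_dense_orbit
    {G X : Type*} [Group G] [TopologicalSpace X] [T2Space X] [MulAction Gᵐᵒᵖ X]
    (hcont : ∀ g : G, Continuous fun x : X => op g • x)
    (hfaith : ∀ g : G, (∀ x : X, op g • x = x) → g = 1)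
    (U : Set X) (hU : IsOpen U) (hnontriv : rigidStabilizer G U ≠ ⊥)
    (x : X) (hx : x ∈ U)
    (hdense : U ⊆ closure {y : X | ∃ g : G,
      (fun z : X => op g • z) '' U = U ∧ y = op g • x}) :
    ∃ h ∈ rigidStabilizer G U, op h • x ≠ x := by
  by_contra hcon
  push_neg at hcon
  -- get a nontrivial element of the rigid stabilizer
  obtain ⟨⟨h, hhR⟩, hh1'⟩ := (Subgroup.ne_bot_iff_exists_ne_one).mp hnontriv
  have hh1 : h ≠ 1 := by simpa [Subgroup.mk_eq_one] using hh1'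
  -- the fixed-point set of h is closed
  have hF : IsClosed {z : X | op h • z = z} :=
    isClosed_eq (hcont h) continuous_id
  -- h fixes the complement of U
  have hcompl : ∀ z ∈ Uᶜ, op h • z = z := hhR
  -- h fixes every orbit point
  have horb : {y : X | ∃ g : G, (fun z : X => op g • z) '' U = U ∧ y = op g • x}
      ⊆ {z : X | op h • z = z} := by
    rintro y ⟨g, hgU, rfl⟩
    -- first: g maps Uᶜ into Uᶜ
    have hgc : ∀ z ∈ Uᶜ, op g • z ∈ Uᶜ := by
      intro z hz hmem
      rw [← hgU] at hmem
      obtain ⟨u, hu, huz⟩ := hmem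
      exact hz ((MulAction.injective (op g) huz) ▸ hu)
    -- conjugate lies in the rigid stabilizer
    have hconj : g * h * g⁻¹ ∈ rigidStabilizer G U := by
      intro z hz
      have : op (g * h * g⁻¹) • z = op g⁻¹ • (op h • (op g • z)) := by
        simp [mul_smul]
      rw [this, hcompl _ (hgc z hz), op_inv, inv_smul_smul]
    have := hcon _ hconj
    have h2 : op (g * h * g⁻¹) • x = op g⁻¹ • (op h • (op g • x)) := by
      simp [mul_smul]
    rw [h2] at this
    have := congrArg (fun w => op g • w) this
    simpa [op_inv, smul_smul] using this
  -- hence h fixes all of U (by density) and all of Uᶜ, so h = 1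
  have hUfix : U ⊆ {z : X | op h • z = z} :=
    fun z hz => closure_minimal horb hF (hdense hz)
  have : h = 1 := hfaith h (fun z => by
    by_cases hzU : z ∈ U
    · exact hUfix hzU
    · exact hcompl z hzU)
  exact hh1 this
end

section
/- Let G be a group acting on the right by homeomorphisms on a Cantor set X, and assume the action is compressible: for every clopen set U ⊊ X there exist g₁, g₂ ∈ G such that (U·g₁) ∪ (U·g₂) ⊆ U and (U·g₁) ∩ (U·g₂) = ∅. Then every G-invariant probability measure ν on F(X) satisfies ν({C ∈ F(X) : C ≠ ∅ and C ≠ X}) = 0; that is, ν is concentrated on the two points ∅ and X of F(X). -/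
open MulOpposite MeasureTheory

/-- The σ-algebra on the space of subgroups of `G`, generated by the sets
`{H : g ∈ H}` for `g ∈ G` (the Borel σ-algebra of the Chabauty topology). -/
instance subgroupMeasurableSpace (G : Type*) [Group G] : MeasurableSpace (Subgroup G) :=
  MeasurableSpace.generateFrom {A : Set (Subgroup G) | ∃ g : G, A = {H : Subgroup G | g ∈ H}}

/-- Conjugation `H ↦ g⁻¹ H g` on subgroups. -/
def conjSubgroup {G : Type*} [Group G] (g : G) (H : Subgroup G) : Subgroup G :=
  Subgroup.map (MulAut.conj g⁻¹).toMonoidHom H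

/-- The fixed-point set of a subgroup `H` in `X`: `Fix(H) = {x : x·h = x for all h ∈ H}`. -/
def fixedSet (X : Type*) {G : Type*} [Group G] [MulAction Gᵐᵒᵖ X] (H : Subgroup G) : Set X :=
  {x : X | ∀ h ∈ H, op h • x = x}

/-- The space `F(X)` of closed subsets of `X`. -/
def ClosedSubsets (X : Type*) [TopologicalSpace X] : Type _ := {C : Set X // IsClosed C}

/-- The σ-algebra on `F(X)` generated by the sets `{C : C ⊆ U}` for `U` clopen
(for a Cantor set `X` this is the Borel σ-algebra of the Vietoris topology). -/
instance closedSubsetsMeasurableSpace (X : Type*) [TopologicalSpace X] :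
    MeasurableSpace (ClosedSubsets X) :=
  MeasurableSpace.generateFrom
    {S : Set (ClosedSubsets X) | ∃ U : Set X, IsClopen U ∧
      S = {C : ClosedSubsets X | C.1 ⊆ U}}

/-- The action of `g ∈ G` on `F(X)`, `C ↦ C·g` (the image of a closed set under the
homeomorphism `x ↦ x·g` is closed since `X` is compact Hausdorff). -/
def closedImage {G X : Type*} [Group G] [TopologicalSpace X] [CompactSpace X] [T2Space X]
    [MulAction Gᵐᵒᵖ X] (hcont : ∀ g : G, Continuous fun x : X => op g • x) (g : G)
    (C : ClosedSubsets X) : ClosedSubsets X :=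
  ⟨(fun x : X => op g • x) '' C.1, ((C.2.isCompact).image (hcont g)).isClosed⟩

open Pointwise

/-- **Corollary 5.1 (key step).** Let `G` act by homeomorphisms on a Cantor set `X`
(the right action is encoded as a left action of `Gᵐᵒᵖ`, so `x·g = op g • x`), and
assume the action is compressible: every proper clopen `U` admits `g₁, g₂` with
`U·g₁ ∪ U·g₂ ⊆ U` and `U·g₁ ∩ U·g₂ = ∅`.  Then every `G`-invariant probability measure
on `F(X)` is concentrated on `{∅, X}`. -/
theorem compressible_invariant_measure_trivial
    {G X : Type*} [Group G] [TopologicalSpace X] [Nonempty X] [CompactSpace X]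
    [TopologicalSpace.MetrizableSpace X] [TotallyDisconnectedSpace X]
    [MulAction Gᵐᵒᵖ X]
    (hperf : ∀ x : X, ¬ IsOpen ({x} : Set X))
    (hcont : ∀ g : G, Continuous fun x : X => op g • x)
    (hcompr : ∀ U : Set X, IsClopen U → U ≠ Set.univ →
      ∃ g₁ g₂ : G,
        ((fun x : X => op g₁ • x) '' U) ∪ ((fun x : X => op g₂ • x) '' U) ⊆ U ∧
        ((fun x : X => op g₁ • x) '' U) ∩ ((fun x : X => op g₂ • x) '' U) = ∅)
    (ν : Measure (ClosedSubsets X)) [IsProbabilityMeasure ν]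
    (hνinv : ∀ g : G, ∀ S : Set (ClosedSubsets X), MeasurableSet S →
      ν (closedImage hcont g ⁻¹' S) = ν S) :
    ν {C : ClosedSubsets X | C.1 ≠ ∅ ∧ C.1 ≠ Set.univ} = 0 := by
  classical
  set T : Set X → Set (ClosedSubsets X) := fun W => {C | C.1 ⊆ W ∧ C.1 ≠ ∅} with hT
  -- measurability of the basic events
  have hmsub : ∀ W : Set X, IsClopen W → MeasurableSet {C : ClosedSubsets X | C.1 ⊆ W} :=
    fun W hW => MeasurableSpace.measurableSet_generateFrom ⟨W, hW, rfl⟩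
  have hmT : ∀ W : Set X, IsClopen W → MeasurableSet (T W) := by
    intro W hW
    have hEq : T W = {C : ClosedSubsets X | C.1 ⊆ W} \ {C | C.1 ⊆ (∅ : Set X)} := by
      ext C
      simp [hT, Set.subset_empty_iff]
    rw [hEq]
    exact (hmsub W hW).diff (hmsub ∅ isClopen_empty)
  -- translates of clopen sets are clopen
  have hclopen_smul : ∀ g : G, ∀ W : Set X, IsClopen W → IsClopen (op g • W) := by
    intro g W hW
    let e : X ≃ₜ X :=
      { toFun := fun x => op g • x, invFun := fun x => op g⁻¹ • x,
        left_inv := fun x => by simp [smul_smul, ← op_mul],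
        right_inv := fun x => by simp [smul_smul, ← op_mul],
        continuous_toFun := hcont g, continuous_invFun := hcont g⁻¹ }
    have him : op g • W = e '' W := by
      rw [← Set.image_smul]; rfl
    rw [him]
    exact ⟨(Homeomorph.isClosed_image e).mpr hW.1, (Homeomorph.isOpen_image e).mpr hW.2⟩
  -- invariance of ν on the events T W
  have hkey : ∀ g : G, ∀ W : Set X, IsClopen W → ν (T (op g • W)) = ν (T W) := by
    intro g W hW
    have h1 := hνinv g⁻¹ (T W) (hmT W hW)
    have hsubiff : ∀ s : Set X, op g⁻¹ • s ⊆ W ↔ s ⊆ op g • W := by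
      intro s; rw [Set.smul_set_subset_iff_subset_inv_smul_set]; simp
    have h2 : closedImage hcont g⁻¹ ⁻¹' (T W) = T (op g • W) := by
      ext C
      have him : (fun x : X => op g⁻¹ • x) '' C.1 = op g⁻¹ • C.1 := Set.image_smul
      simp only [Set.mem_preimage, closedImage, hT, Set.mem_setOf_eq, him,
        hsubiff, ne_eq, Set.smul_set_eq_empty]
      show op g⁻¹ • C.1 ⊆ W ∧ ¬ op g⁻¹ • C.1 = ∅ ↔ _
      rw [hsubiff, Set.smul_set_eq_empty]
    rw [← h1, h2]
  -- each proper clopen U gives a null event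
  have hU0 : ∀ U : Set X, IsClopen U → U ≠ Set.univ → ν (T U) = 0 := by
    intro U hU hUne
    obtain ⟨g₁, g₂, hsub, hdis⟩ := hcompr U hU hUne
    rw [Set.image_smul, Set.image_smul] at hsub hdis
    have hsub1 : op g₁ • U ⊆ U := (Set.union_subset_iff.mp hsub).1
    have hsub2 : op g₂ • U ⊆ U := (Set.union_subset_iff.mp hsub).2
    set V : ℕ → Set X := fun n => op (g₁ * g₂ ^ n) • U with hV
    have hVU : ∀ n, V n ⊆ U := by
      intro n; induction n with
      | zero => simpa [hV] using hsub1
      | succ k ih =>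
          have hstep : V (k + 1) = op g₂ • V k := by
            rw [hV]
            simp only []
            rw [pow_succ, ← mul_assoc, op_mul, mul_smul]
          rw [hstep]
          exact (Set.smul_set_mono ih).trans hsub2
    have hdV : Disjoint (op g₁ • U) (op g₂ • U) := Set.disjoint_iff_inter_eq_empty.mpr hdis
    have hVdis : ∀ m n : ℕ, m < n → Disjoint (V m) (V n) := by
      intro m n hmn
      obtain ⟨d, rfl⟩ : ∃ d, n = m + d + 1 := ⟨n - m - 1, by omega⟩
      have h1 : V m = op (g₂ ^ m) • (op g₁ • U) := by
        rw [hV]; simp only []; rw [op_mul, mul_smul]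
      have h2 : V (m + d + 1) ⊆ op (g₂ ^ m) • (op g₂ • U) := by
        have hEq1 : V (m + d + 1) = op (g₂ ^ m) • (op (g₁ * g₂ ^ (d + 1)) • U) := by
          rw [hV]; simp only []
          rw [show g₁ * g₂ ^ (m + d + 1) = (g₁ * g₂ ^ (d + 1)) * g₂ ^ m by
            rw [mul_assoc, ← pow_add]; ring_nf, op_mul, mul_smul]
        have hEq2 : op (g₁ * g₂ ^ (d + 1)) • U = op g₂ • (op (g₁ * g₂ ^ d) • U) := by
          rw [show g₁ * g₂ ^ (d + 1) = (g₁ * g₂ ^ d) * g₂ by rw [mul_assoc, ← pow_succ],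
            op_mul, mul_smul]
        rw [hEq1, hEq2]
        exact Set.smul_set_mono (Set.smul_set_mono (hVU d))
      have hdd : Disjoint (op (g₂ ^ m) • (op g₁ • U)) (op (g₂ ^ m) • (op g₂ • U)) :=
        Set.disjoint_smul_set.mpr hdV
      rw [h1]
      exact hdd.mono_right h2
    have hTdisJ : Pairwise (Function.onFun Disjoint fun n => T (V n)) := by
      intro m n hmn
      have hdVmn : Disjoint (V m) (V n) :=
        hmn.lt_or_gt.elim (hVdis m n) fun h => (hVdis n m h).symm
      apply Set.disjoint_left.mpr
      rintro C ⟨hC1, hC2⟩ ⟨hD1, _⟩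
      exact hC2 (Set.subset_empty_iff.mp
        ((Set.subset_inter hC1 hD1).trans (Set.disjoint_iff_inter_eq_empty.mp hdVmn).subset))
    have hVclopen : ∀ n, IsClopen (V n) := fun n => hclopen_smul _ U hU
    have hmeas : ∀ n, MeasurableSet (T (V n)) := fun n => hmT _ (hVclopen n)
    have hEqn : ∀ n, ν (T (V n)) = ν (T U) := fun n => hkey _ U hU
    have hle : (∑' _ : ℕ, ν (T U)) ≤ 1 := by
      calc (∑' _ : ℕ, ν (T U)) = ∑' n, ν (T (V n)) := tsum_congr fun n => (hEqn n).symm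
        _ = ν (⋃ n, T (V n)) := (measure_iUnion hTdisJ hmeas).symm
        _ ≤ ν Set.univ := measure_mono (Set.subset_univ _)
        _ = 1 := measure_univ
    by_contra hne
    rw [ENNReal.tsum_const_eq_top_of_ne_zero hne] at hle
    exact (by simp at hle : False)
  -- countability of the family of proper clopen sets
  haveI : T2Space X := inferInstance
  haveI : SecondCountableTopology X := by
    letI := TopologicalSpace.metrizableSpaceMetric X; infer_instance
  have hclcnt : Set.Countable {U : Set X | IsClopen U} := by
    haveI : Countable (TopologicalSpace.Clopens X) :=
      TopologicalSpace.Clopens.countable_iff_secondCountable.mpr ‹_›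
    haveI : Countable {U : Set X // IsClopen U} :=
      Countable.of_equiv (TopologicalSpace.Clopens X)
        ⟨fun s => ⟨s.1, s.2⟩, fun s => ⟨s.1, s.2⟩, fun _ => rfl, fun _ => rfl⟩
    exact Set.countable_coe_iff.mp ‹_›
  have hcnt : Set.Countable {U : Set X | IsClopen U ∧ U ≠ Set.univ} :=
    hclcnt.mono fun U hU => hU.1
  -- the target set is covered by the null events
  have hcover : {C : ClosedSubsets X | C.1 ≠ ∅ ∧ C.1 ≠ Set.univ} ⊆
      ⋃ U ∈ {U : Set X | IsClopen U ∧ U ≠ Set.univ}, T U := by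
    rintro C ⟨hC1, hC2⟩
    obtain ⟨x, hx⟩ : ∃ x, x ∉ C.1 := by
      by_contra h; push_neg at h; exact hC2 (Set.eq_univ_iff_forall.mpr h)
    obtain ⟨V, hVcl, hxV, hVsub⟩ :=
      isTopologicalBasis_isClopen.exists_subset_of_mem_open
        (show x ∈ C.1ᶜ from hx) C.2.isOpen_compl
    refine Set.mem_biUnion (show Vᶜ ∈ {U : Set X | IsClopen U ∧ U ≠ Set.univ} from
      ⟨hVcl.compl, fun h => ?_⟩) ⟨fun y hy hyV => (hVsub hyV) hy, hC1⟩
    have : x ∈ Vᶜ := h ▸ Set.mem_univ x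
    exact this hxV
  refine le_antisymm ?_ zero_le
  calc ν {C : ClosedSubsets X | C.1 ≠ ∅ ∧ C.1 ≠ Set.univ}
      ≤ ν (⋃ U ∈ {U : Set X | IsClopen U ∧ U ≠ Set.univ}, T U) := measure_mono hcover
    _ = 0 := (measure_biUnion_null_iff hcnt).mpr fun U hU => hU0 U hU.1 hU.2
end

section
/- Let Γ be a group acting faithfully by tree automorphisms and level transitively on the boundary X of the spherically symmetric rooted tree with valency sequence d. If u is a finite word such that the rigid vertex stabilizer Rist_Γ(u) is nontrivial, then Rist_Γ(u) has no fixed point in the cylinder C_u: for every x ∈ C_u there exists g ∈ Rist_Γ(u) with x·g ≠ x. -/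
open MulOpposite MeasureTheory

/-- The cylinder in `∏ i, Fin (d i)` of the length-`ℓ` prefix of `z`:
`{x : x i = z i for all i < ℓ}`.  Since every finite word of length `ℓ` extends to a
boundary point, cylinders of length-`ℓ` words are exactly the sets of this form. -/
def cylinder (d : ℕ → ℕ) (ℓ : ℕ) (z : ∀ i, Fin (d i)) : Set (∀ i, Fin (d i)) :=
  {x | ∀ i < ℓ, x i = z i}

/-- `Γ` acts by tree automorphisms: every element maps every cylinder of a length-`ℓ`
word onto a cylinder of a length-`ℓ` word. -/
def ActsByTreeAutomorphisms (G : Type*) (d : ℕ → ℕ) [Group G]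
    [MulAction Gᵐᵒᵖ (∀ i, Fin (d i))] : Prop :=
  ∀ g : G, ∀ ℓ : ℕ, ∀ z : ∀ i, Fin (d i), ∃ z' : ∀ i, Fin (d i),
    (fun x : ∀ i, Fin (d i) => op g • x) '' cylinder d ℓ z = cylinder d ℓ z'

/-- The action of `Γ` is level transitive: for each `ℓ` the induced action on cylinders
of length-`ℓ` words is transitive. -/
def LevelTransitive (G : Type*) (d : ℕ → ℕ) [Group G]
    [MulAction Gᵐᵒᵖ (∀ i, Fin (d i))] : Prop :=
  ∀ ℓ : ℕ, ∀ z z' : ∀ i, Fin (d i), ∃ g : G,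
    (fun x : ∀ i, Fin (d i) => op g • x) '' cylinder d ℓ z = cylinder d ℓ z'

/-- If `Γ` acts faithfully by tree automorphisms and level transitively on the boundary
`∏ i, Fin (d i)` of the spherically symmetric rooted tree with valency sequence `d`
(the right action is encoded as a left action of `Γᵐᵒᵖ`, so `x·g = op g • x`; a word
`u` of length `ℓ` is represented by a boundary point `z` extending it, with cylinder
`cylinder d ℓ z`), and the rigid vertex stabilizer of a word is nontrivial, then it has
no fixed point in the corresponding cylinder. -/
theorem rist_no_fixed_point_in_cylinder
    {G : Type*} [Group G] (d : ℕ → ℕ) (hd : ∀ i, 2 ≤ d i)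
    [MulAction Gᵐᵒᵖ (∀ i, Fin (d i))]
    (hcont : ∀ g : G, Continuous fun x : ∀ i, Fin (d i) => op g • x)
    (hfaith : ∀ g : G, (∀ x : ∀ i, Fin (d i), op g • x = x) → g = 1)
    (htree : ActsByTreeAutomorphisms G d)
    (htrans : LevelTransitive G d)
    (ℓ : ℕ) (z : ∀ i, Fin (d i))
    (hnontriv : rigidStabilizer G (cylinder d ℓ z) ≠ ⊥) :
    ∀ x ∈ cylinder d ℓ z,
      ∃ g ∈ rigidStabilizer G (cylinder d ℓ z), op g • x ≠ x := by
  intro x hx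
  have mem_rist : ∀ g : G, g ∈ rigidStabilizer G (cylinder d ℓ z) ↔
      ∀ w : ∀ i, Fin (d i), w ∉ cylinder d ℓ z → op g • w = w := fun g => Iff.rfl
  -- obtain a nontrivial element of the rigid stabilizer
  obtain ⟨g, hgR, hg1⟩ : ∃ g ∈ rigidStabilizer G (cylinder d ℓ z), g ≠ 1 := by
    by_contra hc
    push_neg at hc
    apply hnontriv
    ext a
    simp only [Subgroup.mem_bot]
    exact ⟨fun ha => hc a ha, fun ha => ha ▸ (rigidStabilizer G (cylinder d ℓ z)).one_mem⟩
  -- g moves some point y, necessarily in the cylinder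
  obtain ⟨y, hy⟩ : ∃ y : ∀ i, Fin (d i), op g • y ≠ y := by
    by_contra hc
    push_neg at hc
    exact hg1 (hfaith g hc)
  have hyC : y ∈ cylinder d ℓ z := by
    by_contra hyC
    exact hy ((mem_rist g).mp hgR y hyC)
  obtain ⟨i, hi⟩ : ∃ i, (op g • y) i ≠ y i := Function.ne_iff.mp hy
  set n : ℕ := max ℓ (i + 1) with hn
  have hℓn : ℓ ≤ n := le_max_left _ _
  have hin : i < n := lt_of_lt_of_le (Nat.lt_succ_self i) (le_max_right _ _)
  -- small cylinders are inside the big one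
  have cylsub : ∀ w : ∀ i, Fin (d i), w ∈ cylinder d ℓ z →
      cylinder d n w ⊆ cylinder d ℓ z := by
    intro w hw v hv j hj
    rw [hv j (lt_of_lt_of_le hj hℓn)]
    exact hw j hj
  have selfmem : ∀ m : ℕ, ∀ w : ∀ i, Fin (d i), w ∈ cylinder d m w :=
    fun m w j _ => rfl
  -- image of the n-cylinder of y under g
  obtain ⟨z', hz'⟩ := htree g n y
  have hgyz' : op g • y ∈ cylinder d n z' := by
    rw [← hz']
    exact ⟨y, selfmem n y, rfl⟩
  -- the two n-cylinders (of y and z') are disjoint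
  have hdisj : ∀ w : ∀ i, Fin (d i),
      w ∈ cylinder d n y → w ∉ cylinder d n z' := by
    intro w hw hw'
    apply hi
    rw [hgyz' i hin, ← hw' i hin, hw i hin]
  -- transitive element sending the n-cylinder of x onto that of y
  obtain ⟨h, hh⟩ := htrans n x y
  have hhx : op h • x ∈ cylinder d n y := by
    rw [← hh]
    exact ⟨x, selfmem n x, rfl⟩
  -- h maps the big cylinder onto itself
  obtain ⟨v, hv⟩ := htree h ℓ z
  have hvz : cylinder d ℓ v = cylinder d ℓ z := by
    have h1 : op h • x ∈ cylinder d ℓ v := by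
      rw [← hv]
      exact ⟨x, hx, rfl⟩
    have h2 : op h • x ∈ cylinder d ℓ z := cylsub y hyC hhx
    ext w
    constructor <;> intro hw j hj
    · rw [hw j hj, ← h1 j hj]
      exact h2 j hj
    · rw [hw j hj, ← h2 j hj]
      exact h1 j hj
  have hCh : (fun w : ∀ i, Fin (d i) => op h • w) '' cylinder d ℓ z
      = cylinder d ℓ z := by rw [hv, hvz]
  -- the conjugate h * g * h⁻¹
  refine ⟨h * g * h⁻¹, ?_, ?_⟩
  · rw [mem_rist]
    intro w hw
    have hw1 : op h • w ∉ cylinder d ℓ z := by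
      intro hmem
      rw [← hCh] at hmem
      obtain ⟨w', hw', heq⟩ := hmem
      exact hw (smul_left_cancel (op h) heq ▸ hw')
    have e1 : op (h * g * h⁻¹) • w = op h⁻¹ • (op g • (op h • w)) := by
      rw [op_mul, op_mul, mul_smul, mul_smul]
    rw [e1, (mem_rist g).mp hgR _ hw1, op_inv, inv_smul_smul]
  · intro heq
    have e1 : op (h * g * h⁻¹) • x = op h⁻¹ • (op g • (op h • x)) := by
      rw [op_mul, op_mul, mul_smul, mul_smul]
    rw [e1, op_inv] at heq
    rw [inv_smul_eq_iff] at heq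
    have hmem : op g • (op h • x) ∈ cylinder d n z' := by
      rw [← hz']
      exact ⟨op h • x, hhx, rfl⟩
    rw [heq] at hmem
    exact hdisj (op h • x) hhx hmem
end
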